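/- arXiv:1008.2111 — 8 statements merged into one kernel-verified Lean document; each statement's English description precedes it below -/
import Mathlib

section
/- (Soundness of double pushout rewriting with respect to colimit decomposition.) Let C and J be categories and let 𝓛, 𝓚, 𝓡, 𝓧, 𝓨, 𝓩 : J ⥤ C be functors equipped with natural transformations α : 𝓚 ⟶ 𝓛, β : 𝓚 ⟶ 𝓡, ι : 𝓚 ⟶ 𝓨, μ : 𝓛 ⟶ 𝓧, γ : 𝓨 ⟶ 𝓧, ν : 𝓡 ⟶ 𝓩, δ : 𝓨 ⟶ 𝓩 satisfying μ ∘ α = γ ∘ ι and ν ∘ β = δ ∘ ι, such that for every object i of J both component squares are pushouts in C: the square with sides α_i : 𝓚_i → 𝓛_i, ι_i : 𝓚_i → 𝓨_i, μ_i : 𝓛_i → 𝓧_i, γ_i : 𝓨_i → 𝓧_i, and the square with sides β_i : 𝓚_i → 𝓡_i, ι_i : 𝓚_i → 𝓨_i, ν_i : 𝓡_i → 𝓩_i, δ_i : 𝓨_i → 𝓩_i. If colimit cocones of all six functors exist, then both induced squares on colimit objects are pushouts in C: the square with sides colim α, colim ι, colim μ, colim γ, and the square with sides colim β, colim ι, colim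 ν, colim δ. In other words, the six colimit objects together with the induced morphisms form a double pushout transformation diagram in C. -/
open CategoryTheory CategoryTheory.Limits

/-- Given a colimit cocone `cF` of `F`, a cocone `cG` of `G` and a natural transformation
`τ : F ⟶ G`, the induced morphism between the cocone points (`colim τ`). -/
noncomputable def colimMapPt {J C : Type*} [Category J] [Category C] {F G : J ⥤ C}
    (τ : F ⟶ G) {cF : Cocone F} (hF : IsColimit cF) (cG : Cocone G) : cF.pt ⟶ cG.pt :=
  hF.desc ((Cocone.precompose τ).obj cG)

lemma colimMapPt_fac {J C : Type*} [Category J] [Category C] {F G : J ⥤ C}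
    (τ : F ⟶ G) {cF : Cocone F} (hF : IsColimit cF) (cG : Cocone G) (i : J) :
    cF.ι.app i ≫ colimMapPt τ hF cG = τ.app i ≫ cG.ι.app i :=
  hF.fac _ i

lemma colimMapPt_comp {J C : Type*} [Category J] [Category C] {F G H : J ⥤ C}
    (τ : F ⟶ G) (σ : G ⟶ H) {cF : Cocone F} {cG : Cocone G} (hF : IsColimit cF)
    (hG : IsColimit cG) (cH : Cocone H) :
    colimMapPt τ hF cG ≫ colimMapPt σ hG cH = colimMapPt (τ ≫ σ) hF cH := by
  apply hF.hom_ext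
  intro i
  rw [reassoc_of% colimMapPt_fac τ hF cG i, colimMapPt_fac, colimMapPt_fac]
  simp

lemma colim_isPushout {J C : Type*} [Category J] [Category C]
    {𝓛 𝓚 𝓨 𝓧 : J ⥤ C}
    (α : 𝓚 ⟶ 𝓛) (ι : 𝓚 ⟶ 𝓨) (μ : 𝓛 ⟶ 𝓧) (γ : 𝓨 ⟶ 𝓧)
    (hcomm : α ≫ μ = ι ≫ γ)
    (hsq : ∀ i : J, IsPushout (α.app i) (ι.app i) (μ.app i) (γ.app i))
    {cL : Cocone 𝓛} {cK : Cocone 𝓚} {cY : Cocone 𝓨} {cX : Cocone 𝓧}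
    (hL : IsColimit cL) (hK : IsColimit cK) (hY : IsColimit cY) (hX : IsColimit cX) :
    IsPushout (colimMapPt α hK cL) (colimMapPt ι hK cY)
      (colimMapPt μ hL cX) (colimMapPt γ hY cX) := by
  have weq : colimMapPt α hK cL ≫ colimMapPt μ hL cX
      = colimMapPt ι hK cY ≫ colimMapPt γ hY cX := by
    rw [colimMapPt_comp, colimMapPt_comp, hcomm]
  have key : ∀ (s : PushoutCocone (colimMapPt α hK cL) (colimMapPt ι hK cY)) (i : J),
      α.app i ≫ cL.ι.app i ≫ s.inl = ι.app i ≫ cY.ι.app i ≫ s.inr := by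
    intro s i
    rw [← Category.assoc, ← colimMapPt_fac α hK cL i, ← Category.assoc,
      ← colimMapPt_fac ι hK cY i, Category.assoc, Category.assoc, s.condition]
  -- the compatible family of maps out of the pointwise pushouts
  let d : ∀ (s : PushoutCocone (colimMapPt α hK cL) (colimMapPt ι hK cY)) (i : J),
      𝓧.obj i ⟶ s.pt := fun s i =>
    (hsq i).desc (cL.ι.app i ≫ s.inl) (cY.ι.app i ≫ s.inr) (key s i)
  have hdl : ∀ s i, μ.app i ≫ d s i = cL.ι.app i ≫ s.inl := fun s i => (hsq i).inl_desc _ _ _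
  have hdr : ∀ s i, γ.app i ≫ d s i = cY.ι.app i ≫ s.inr := fun s i => (hsq i).inr_desc _ _ _
  have hnat : ∀ s {i j : J} (f : i ⟶ j), 𝓧.map f ≫ d s j = d s i := by
    intro s i j f
    apply (hsq i).hom_ext
    · rw [← Category.assoc, ← μ.naturality f, Category.assoc, hdl, ← Category.assoc,
        cL.w f, hdl]
    · rw [← Category.assoc, ← γ.naturality f, Category.assoc, hdr, ← Category.assoc,
        cY.w f, hdr]
  refine IsPushout.of_isColimit (PushoutCocone.IsColimit.mk weq
    (fun s => hX.desc ⟨s.pt,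
      { app := d s
        naturality := fun i j f => by simp [hnat s f] }⟩) ?_ ?_ ?_)
  · intro s
    apply hL.hom_ext
    intro i
    rw [reassoc_of% colimMapPt_fac μ hL cX i, hX.fac]
    exact hdl s i
  · intro s
    apply hY.hom_ext
    intro i
    rw [reassoc_of% colimMapPt_fac γ hY cX i, hX.fac]
    exact hdr s i
  · intro s m h₁ h₂
    apply hX.hom_ext
    intro i
    rw [hX.fac]
    apply (hsq i).hom_ext
    · rw [← Category.assoc, ← colimMapPt_fac μ hL cX i, Category.assoc, h₁, hdl]
    · rw [← Category.assoc, ← colimMapPt_fac γ hY cX i, Category.assoc, h₂, hdr]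

/-- Soundness of double pushout rewriting w.r.t. colimit decomposition:
given a double square diagram of natural transformations whose component squares are all
pushouts, the induced squares on colimit objects form a double pushout transformation
diagram. -/
theorem dpo_soundness_colimit_decomposition
    {J C : Type*} [Category J] [Category C]
    {𝓛 𝓚 𝓡 𝓧 𝓨 𝓩 : J ⥤ C}
    (α : 𝓚 ⟶ 𝓛) (β : 𝓚 ⟶ 𝓡) (ι : 𝓚 ⟶ 𝓨) (μ : 𝓛 ⟶ 𝓧) (γ : 𝓨 ⟶ 𝓧) (ν : 𝓡 ⟶ 𝓩) (δ : 𝓨 ⟶ 𝓩)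
    (hcomm₁ : α ≫ μ = ι ≫ γ) (hcomm₂ : β ≫ ν = ι ≫ δ)
    (hsq₁ : ∀ i : J, IsPushout (α.app i) (ι.app i) (μ.app i) (γ.app i))
    (hsq₂ : ∀ i : J, IsPushout (ι.app i) (β.app i) (δ.app i) (ν.app i))
    {cL : Cocone 𝓛} {cK : Cocone 𝓚} {cR : Cocone 𝓡}
    {cX : Cocone 𝓧} {cY : Cocone 𝓨} {cZ : Cocone 𝓩}
    (hL : IsColimit cL) (hK : IsColimit cK) (hR : IsColimit cR)
    (hX : IsColimit cX) (hY : IsColimit cY) (hZ : IsColimit cZ) :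
    IsPushout (colimMapPt α hK cL) (colimMapPt ι hK cY)
        (colimMapPt μ hL cX) (colimMapPt γ hY cX)
      ∧ IsPushout (colimMapPt ι hK cY) (colimMapPt β hK cR)
        (colimMapPt δ hY cZ) (colimMapPt ν hR cZ) :=
  ⟨colim_isPushout α ι μ γ hcomm₁ hsq₁ hL hK hY hX,
   colim_isPushout ι β δ ν hcomm₂.symm hsq₂ hY hK hR hZ⟩
end

section
/- (Double Pushout Lifting Lemma.) Let C be an adhesive category. Suppose given a double pushout transformation diagram in C for a rule L ←a− K −b→ R, with morphisms m : L → X, j : K → Y, n : R → Z, c : Y → X, d : Y → Z, such that a is a monomorphism and moreover either m is a monomorphism or b is a monomorphism. Suppose further given objects L', K', R', X' of C, morphisms ψ_L : L' → L, ψ_K : K' → K, ψ_R : R' → R, ψ_X : X' → X, a' : K' → L', b' : K' → R', m' : L' → X' such that the following three squares are pullbacks: (a', ψ_K; ψ_L, a), i.e. a ∘ ψ_K = ψ_L ∘ a' is a pullback of a along ψ_L; (b', ψ_K; ψ_R, b), i.e. b ∘ ψ_K = ψ_R ∘ b' is a pullback of b along ψ_R; and (m', ψ_L; ψ_X, m),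 i.e. m ∘ ψ_L = ψ_X ∘ m' is a pullback of m along ψ_X. Then there exist objects Y', Z' and morphisms j' : K' → Y', c' : Y' → X', d' : Y' → Z', n' : R' → Z', ψ_Y : Y' → Y, ψ_Z : Z' → Z such that: (i) m' ∘ a' = c' ∘ j' and the cospan (m', c') is a pushout of the span (a', j'); (ii) n' ∘ b' = d' ∘ j' and the cospan (d', n') is a pushout of the span (j', b'); (iii) the four squares j ∘ ψ_K = ψ_Y ∘ j', c ∘ ψ_Y = ψ_X ∘ c', d ∘ ψ_Y = ψ_Z ∘ d', and n ∘ ψ_R = ψ_Z ∘ n' are all pullbacks. -/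
open CategoryTheory CategoryTheory.Limits

/-- The top map of a pullback square is a mono whenever the bottom map is. -/
lemma mono_top_of_isPullback {C : Type*} [Category C] {P A B D : C}
    {fst : P ⟶ A} {snd : P ⟶ B} {f : A ⟶ D} {g : B ⟶ D}
    (h : IsPullback fst snd f g) [Mono f] : Mono snd := by
  constructor
  intro W u v huv
  apply h.hom_ext _ huv
  rw [← cancel_mono f, Category.assoc, Category.assoc, h.w, reassoc_of% huv]

/-- Double Pushout Lifting Lemma: in an adhesive category (which has pullbacks
and pushouts along monomorphisms), a double pushout transformation diagram can be lifted
along pullbacks of its rule span and of its match. -/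
theorem dpo_lifting
    {C : Type*} [Category C] [Adhesive C] [HasPullbacks C]
    {L K R X Y Z : C}
    (a : K ⟶ L) (b : K ⟶ R) (m : L ⟶ X) (j : K ⟶ Y) (n : R ⟶ Z) (c : Y ⟶ X) (d : Y ⟶ Z)
    [Mono a] (hmb : Mono m ∨ Mono b)
    (hpo₁ : IsPushout a j m c) (hpo₂ : IsPushout j b d n)
    {L' K' R' X' : C}
    (ψL : L' ⟶ L) (ψK : K' ⟶ K) (ψR : R' ⟶ R) (ψX : X' ⟶ X)
    (a' : K' ⟶ L') (b' : K' ⟶ R') (m' : L' ⟶ X')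
    (hpb_a : IsPullback a' ψK ψL a)
    (hpb_b : IsPullback b' ψK ψR b)
    (hpb_m : IsPullback m' ψL ψX m) :
    ∃ (Y' Z' : C) (j' : K' ⟶ Y') (c' : Y' ⟶ X') (d' : Y' ⟶ Z') (n' : R' ⟶ Z')
      (ψY : Y' ⟶ Y) (ψZ : Z' ⟶ Z),
      IsPushout a' j' m' c' ∧ IsPushout j' b' d' n' ∧
      IsPullback j' ψK ψY j ∧ IsPullback c' ψY ψX c ∧
      IsPullback d' ψY ψZ d ∧ IsPullback n' ψR ψZ n := by
  -- Y' is the pullback of ψX along c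
  let Y' : C := pullback ψX c
  let c' : Y' ⟶ X' := pullback.fst ψX c
  let ψY : Y' ⟶ Y := pullback.snd ψX c
  have hpb_c : IsPullback c' ψY ψX c := IsPullback.of_hasPullback ψX c
  -- induced map j' : K' → Y'
  have wj : (a' ≫ m') ≫ ψX = (ψK ≫ j) ≫ c := by
    rw [Category.assoc, hpb_m.w, reassoc_of% hpb_a.w, Category.assoc, ← hpo₁.w]
  let j' : K' ⟶ Y' := pullback.lift (a' ≫ m') (ψK ≫ j) wj
  have hjc : j' ≫ c' = a' ≫ m' := pullback.lift_fst _ _ _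
  have hjψ : j' ≫ ψY = ψK ≫ j := pullback.lift_snd _ _ _
  -- the back face over j is a pullback, by pasting
  have hpb_j : IsPullback j' ψK ψY j := by
    apply IsPullback.of_right _ hjψ hpb_c
    rw [hjc, ← hpo₁.w]
    exact hpb_a.paste_horiz hpb_m
  -- top of the first cube is a pushout, by van Kampen
  have vk₁ := Adhesive.van_kampen hpo₁
  have hpo₁' : IsPushout a' j' m' c' :=
    (vk₁ a' j' m' c' ψK ψL ψY ψX hpb_a hpb_j hpb_m.toCommSq hpb_c.toCommSq
      ⟨by rw [hjc]⟩).mpr ⟨hpb_m, hpb_c⟩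
  -- either j or b is a mono
  have hjb : Mono j ∨ Mono b := by
    rcases hmb with hm | hb
    · left
      exact mono_top_of_isPullback
        (Adhesive.isPullback_of_isPushout_of_mono_left hpo₁)
    · right; exact hb
  -- the second pushout is van Kampen, and the lifted span has a mono leg
  have vk₂ : hpo₂.IsVanKampen := by
    rcases hjb with hj | hb
    · exact Adhesive.van_kampen hpo₂
    · exact Adhesive.van_kampen' hpo₂
  have hpush : HasPushout j' b' := by
    rcases hjb with hj | hb
    · have : Mono j' := mono_top_of_isPullback hpb_j.flip
      infer_instance
    · have : Mono b' := mono_top_of_isPullback hpb_b.flip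
      exact hasPushout_symmetry b' j'
  -- Z' is the pushout of j' and b'
  let Z' : C := pushout j' b'
  let d' : Y' ⟶ Z' := pushout.inl j' b'
  let n' : R' ⟶ Z' := pushout.inr j' b'
  have hpo₂' : IsPushout j' b' d' n' := IsPushout.of_hasPushout j' b'
  have wz : j' ≫ ψY ≫ d = b' ≫ ψR ≫ n := by
    rw [reassoc_of% hjψ, hpo₂.w, ← reassoc_of% hpb_b.w]
  let ψZ : Z' ⟶ Z := pushout.desc (ψY ≫ d) (ψR ≫ n) wz
  have hdψ : d' ≫ ψZ = ψY ≫ d := pushout.inl_desc _ _ _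
  have hnψ : n' ≫ ψZ = ψR ≫ n := pushout.inr_desc _ _ _
  -- front faces of the second cube are pullbacks, by van Kampen
  have hfronts := (vk₂ j' b' d' n' ψK ψY ψR ψZ hpb_j hpb_b ⟨hdψ⟩ ⟨hnψ⟩
    ⟨hpo₂'.w⟩).mp hpo₂'
  exact ⟨Y', Z', j', c', d', n', ψY, ψZ, hpo₁', hpo₂', hpb_j, hpb_c,
    hfronts.1, hfronts.2⟩
end

section
/- Let C be an adhesive category. Suppose the cospan (m : L → X, c : Y → X) is a pushout of the span (a : K → L, j : K → Y) with a a monomorphism. Let ψ_L : L' → L, ψ_K : K' → K, ψ_X : X' → X, a' : K' → L', m' : L' → X' be morphisms such that the squares a ∘ ψ_K = ψ_L ∘ a' and m ∘ ψ_L = ψ_X ∘ m' are pullbacks, and let (ψ_Y : Y' → Y, c' : Y' → X') be a pullback of the cospan (c : Y → X, ψ_X : X' → X). Then there is a unique morphism j' : K' → Y' with ψ_Y ∘ j' = j ∘ ψ_K and c' ∘ j' = m' ∘ a'; for this j' the square j ∘ ψ_K = ψ_Y ∘ j' is a pullback, and the cospan (m' : L' → X', c' : Y' → X') is a pushout of the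 span (a' : K' → L', j' : K' → Y'). -/
open CategoryTheory CategoryTheory.Limits

/-- in an adhesive category, pulling back a pushout along a monomorphism
(on the left of a DPO diagram) yields a pushout: there is a unique comparison morphism
`j'`, its square is a pullback, and the lifted square is again a pushout. -/
theorem dpo_left_square_lifting
    {C : Type*} [Category C] [Adhesive C] [HasPullbacks C]
    {L K X Y : C} (a : K ⟶ L) (j : K ⟶ Y) (m : L ⟶ X) (c : Y ⟶ X)
    [Mono a] (hpo : IsPushout a j m c)
    {L' K' X' Y' : C}
    (ψL : L' ⟶ L) (ψK : K' ⟶ K) (ψX : X' ⟶ X) (ψY : Y' ⟶ Y)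
    (a' : K' ⟶ L') (m' : L' ⟶ X') (c' : Y' ⟶ X')
    (hpb_a : IsPullback a' ψK ψL a)
    (hpb_m : IsPullback m' ψL ψX m)
    (hpb_c : IsPullback ψY c' c ψX) :
    (∃! j' : K' ⟶ Y', j' ≫ ψY = ψK ≫ j ∧ j' ≫ c' = a' ≫ m') ∧
    ∀ j' : K' ⟶ Y', (j' ≫ ψY = ψK ≫ j ∧ j' ≫ c' = a' ≫ m') →
      IsPullback j' ψK ψY j ∧ IsPushout a' j' m' c' := by
  have hw : (ψK ≫ j) ≫ c = (a' ≫ m') ≫ ψX := by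
    rw [Category.assoc, ← hpo.w, ← Category.assoc, ← hpb_a.w, Category.assoc, ← hpb_m.w,
      ← Category.assoc]
  constructor
  · exact ⟨hpb_c.lift (ψK ≫ j) (a' ≫ m') hw,
      ⟨hpb_c.lift_fst _ _ _, hpb_c.lift_snd _ _ _⟩,
      fun y hy => hpb_c.hom_ext (by rw [hy.1, hpb_c.lift_fst])
        (by rw [hy.2, hpb_c.lift_snd])⟩
  · rintro j' ⟨h1, h2⟩
    -- the big square (a' ≫ m', ψK, ψX, a ≫ m) is a pullback
    have hbig : IsPullback (j' ≫ c') ψK ψX (j ≫ c) := by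
      rw [h2, ← hpo.w]
      exact hpb_a.paste_horiz hpb_m
    have hpb_j : IsPullback j' ψK ψY j :=
      IsPullback.of_right hbig h1 hpb_c.flip
    refine ⟨hpb_j, ?_⟩
    exact ((Adhesive.van_kampen hpo) a' j' m' c' ψK ψL ψY ψX hpb_a hpb_j
      hpb_m.toCommSq hpb_c.flip.toCommSq ⟨h2.symm⟩).mpr ⟨hpb_m, hpb_c.flip⟩
end

section
/- (Pullback stability of the double pushout approach in adhesive categories.) Let C be an adhesive category and suppose given a double pushout transformation diagram in C for a rule L ←a− K −b→ R, with morphisms m : L → X, j : K → Y, n : R → Z, c : Y → X, d : Y → Z, where a and b are monomorphisms. Suppose given a commutative double-square diagram D' in C with objects L', K', R', X', Y', Z', a span L' ←a'− K' −b'→ R', morphisms m' : L' → X', j' : K' → Y', n' : R' → Z', c' : Y' → X', d' : Y' → Z' satisfying m' ∘ a' = c' ∘ j' and n' ∘ b' = d' ∘ j', together with morphisms ψ_L : L' → L, ψ_K : K' → K, ψ_R : R' → R, ψ_X : X' → X, ψ_Y : Y' → Y, ψ_Z : Z' → Z such that all six comparison squares (for a, b, m, j, n and also c, d, i.e. the squares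 a ∘ ψ_K = ψ_L ∘ a', b ∘ ψ_K = ψ_R ∘ b', m ∘ ψ_L = ψ_X ∘ m', j ∘ ψ_K = ψ_Y ∘ j', n ∘ ψ_R = ψ_Z ∘ n', c ∘ ψ_Y = ψ_X ∘ c', d ∘ ψ_Y = ψ_Z ∘ d') are pullbacks. Then D' is again a double pushout transformation diagram: the cospan (m', c') is a pushout of the span (a', j'), and the cospan (d', n') is a pushout of the span (j', b'). -/
open CategoryTheory CategoryTheory.Limits

/-- Pullback stability of the double pushout approach in adhesive categories:
the pullback of a double pushout transformation diagram (for a rule of monomorphisms) along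
a cartesian transformation of double square diagrams is again a double pushout
transformation diagram. -/
theorem dpo_pullback_stable
    {C : Type*} [Category C] [Adhesive C] [HasPullbacks C]
    {L K R X Y Z : C}
    (a : K ⟶ L) (b : K ⟶ R) (m : L ⟶ X) (j : K ⟶ Y) (n : R ⟶ Z) (c : Y ⟶ X) (d : Y ⟶ Z)
    [Mono a] [Mono b]
    (hpo₁ : IsPushout a j m c) (hpo₂ : IsPushout j b d n)
    {L' K' R' X' Y' Z' : C}
    (a' : K' ⟶ L') (b' : K' ⟶ R') (m' : L' ⟶ X') (j' : K' ⟶ Y') (n' : R' ⟶ Z')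
    (c' : Y' ⟶ X') (d' : Y' ⟶ Z')
    (hcomm₁ : a' ≫ m' = j' ≫ c') (hcomm₂ : b' ≫ n' = j' ≫ d')
    (ψL : L' ⟶ L) (ψK : K' ⟶ K) (ψR : R' ⟶ R) (ψX : X' ⟶ X) (ψY : Y' ⟶ Y) (ψZ : Z' ⟶ Z)
    (hpb_a : IsPullback a' ψK ψL a)
    (hpb_b : IsPullback b' ψK ψR b)
    (hpb_m : IsPullback m' ψL ψX m)
    (hpb_j : IsPullback j' ψK ψY j)
    (hpb_n : IsPullback n' ψR ψZ n)
    (hpb_c : IsPullback c' ψY ψX c)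
    (hpb_d : IsPullback d' ψY ψZ d) :
    IsPushout a' j' m' c' ∧ IsPushout j' b' d' n' := by
  constructor
  · exact (Adhesive.van_kampen hpo₁ a' j' m' c' ψK ψL ψY ψX hpb_a hpb_j
      hpb_m.toCommSq hpb_c.toCommSq ⟨hcomm₁⟩).mpr ⟨hpb_m, hpb_c⟩
  · exact (Adhesive.van_kampen' hpo₂ j' b' d' n' ψK ψY ψR ψZ hpb_j hpb_b
      hpb_d.toCommSq hpb_n.toCommSq ⟨hcomm₂.symm⟩).mpr ⟨hpb_d, hpb_n⟩
end

section
/- (Global decomposition for double pushout rewriting.) Let C be an adhesive category and J a category. Suppose given a double pushout transformation diagram in C for a rule L ←a− K −b→ R with a and b monomorphisms, with morphisms m : L → X, j : K → Y, n : R → Z, c : Y → X, d : Y → Z. Suppose given a cospan w : X → U, t : Z → U with w ∘ c = t ∘ d, a functor 𝓤 : J ⥤ C whose colimit cocone φ : 𝓤 ⟶ Δ U is pullback-stable (universal), a functor 𝓧 : J ⥤ C with a cocone ξ : 𝓧 ⟶ Δ X, and a natural transformation ω : 𝓧 ⟶ 𝓤 such that for every object i of J the square w ∘ ξ_i = φ_i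 ∘ ω_i is a pullback. Then there exist functors 𝓛, 𝓚, 𝓡, 𝓨, 𝓩 : J ⥤ C and natural transformations α : 𝓚 ⟶ 𝓛, β : 𝓚 ⟶ 𝓡, ι : 𝓚 ⟶ 𝓨, μ : 𝓛 ⟶ 𝓧, γ : 𝓨 ⟶ 𝓧, ν : 𝓡 ⟶ 𝓩, δ : 𝓨 ⟶ 𝓩 with μ ∘ α = γ ∘ ι and ν ∘ β = δ ∘ ι, together with colimit cocones of 𝓛, 𝓚, 𝓡, 𝓨, 𝓩 with apexes L, K, R, Y, Z respectively (and ξ is a colimit cocone of 𝓧), such that for every object i of J the component diagram (with rule 𝓛_i ←α_i− 𝓚_i −β_i→ 𝓡_i and morphisms μ_i, ι_i, ν_i, γ_i, δ_i) is a double pushout transformation diagram in C, and the induced morphisms on colimits are the original morphisms: colim α = a, colim β = b, colim μ = m, colim ι = j, colim ν = n, colim γ = c, colim δ = d. -/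
open CategoryTheory CategoryTheory.Limits

section DPOAux

attribute [simp] pullback.lift_fst pullback.lift_snd pullback.lift_fst_assoc pullback.lift_snd_assoc pullback.map

variable {C : Type*} [Category C] [HasPullbacks C]
variable {J : Type*} [Category J]
variable {U : C} (𝓤 : J ⥤ C) (φ : 𝓤 ⟶ (Functor.const J).obj U)

/-- The componentwise-pullback functor of a colimit decomposition of `U` along `p : V ⟶ U`. -/
@[simps]
noncomputable abbrev DPO.pbF {V : C} (p : V ⟶ U) : J ⥤ C where
  obj i := pullback p (φ.app i)
  map {i i'} f := pullback.map p (φ.app i) p (φ.app i') (𝟙 V) (𝓤.map f) (𝟙 U)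
    (by simp) (by simpa using (φ.naturality f).symm)
  map_id i := by apply pullback.hom_ext <;> simp
  map_comp f g := by apply pullback.hom_ext <;> simp

/-- The cocone of the componentwise-pullback functor over `V`. -/
@[simps]
noncomputable def DPO.pbCone {V : C} (p : V ⟶ U) : DPO.pbF 𝓤 φ p ⟶ (Functor.const J).obj V where
  app i := pullback.fst _ _
  naturality i i' f := by simp

/-- The projection of the componentwise-pullback functor to `𝓤`. -/
@[simps]
noncomputable def DPO.pbSnd {V : C} (p : V ⟶ U) : DPO.pbF 𝓤 φ p ⟶ 𝓤 where
  app i := pullback.snd _ _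
  naturality i i' f := by simp

/-- Functoriality of the componentwise pullback in `V`. -/
@[simps]
noncomputable def DPO.pbHom {V V' : C} {p : V ⟶ U} {p' : V' ⟶ U} (s : V ⟶ V') (hs : p = s ≫ p') :
    DPO.pbF 𝓤 φ p ⟶ DPO.pbF 𝓤 φ p' where
  app i := pullback.map p (φ.app i) p' (φ.app i) s (𝟙 _) (𝟙 _) (by simp [hs]) (by simp)
  naturality i i' f := by apply pullback.hom_ext <;> simp

/-- The comparison from the componentwise pullback along `s ≫ w` to a functor `𝓧` that is a
componentwise pullback of `w`. -/
@[simps]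
noncomputable def DPO.pbTo {V X : C} {w : X ⟶ U} {𝓧 : J ⥤ C} {ξ : 𝓧 ⟶ (Functor.const J).obj X}
    {ω : 𝓧 ⟶ 𝓤} (hω : ∀ i : J, IsPullback (ξ.app i) (ω.app i) w (φ.app i))
    (s : V ⟶ X) : DPO.pbF 𝓤 φ (s ≫ w) ⟶ 𝓧 where
  app i := (hω i).lift (pullback.fst _ _ ≫ s) (pullback.snd _ _)
    (by rw [Category.assoc]; exact pullback.condition)
  naturality i i' f := by
    apply (hω i').hom_ext
    · have hξn : 𝓧.map f ≫ ξ.app i' = ξ.app i := by simpa using ξ.naturality f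
      simp [hξn, (hω i).lift_fst, (hω i').lift_fst]
    · simp [ω.naturality f, (hω i).lift_snd, (hω i').lift_snd]

@[simp]
theorem DPO.pbTo_app_fst {V X : C} {w : X ⟶ U} {𝓧 : J ⥤ C} {ξ : 𝓧 ⟶ (Functor.const J).obj X}
    {ω : 𝓧 ⟶ 𝓤} (hω : ∀ i : J, IsPullback (ξ.app i) (ω.app i) w (φ.app i))
    (s : V ⟶ X) (i : J) :
    (DPO.pbTo 𝓤 φ hω s).app i ≫ ξ.app i = pullback.fst _ _ ≫ s :=
  (hω i).lift_fst _ _ _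

@[simp]
theorem DPO.pbTo_app_snd {V X : C} {w : X ⟶ U} {𝓧 : J ⥤ C} {ξ : 𝓧 ⟶ (Functor.const J).obj X}
    {ω : 𝓧 ⟶ 𝓤} (hω : ∀ i : J, IsPullback (ξ.app i) (ω.app i) w (φ.app i))
    (s : V ⟶ X) (i : J) :
    (DPO.pbTo 𝓤 φ hω s).app i ≫ ω.app i = pullback.snd _ _ :=
  (hω i).lift_snd _ _ _

/-- A comparison square between two pullbacks of components of `φ` is itself a pullback. -/
theorem DPO.sq_pb {A B P Q : C} {i : J} {p₁ : P ⟶ A} {p₂ : P ⟶ 𝓤.obj i} {q₁ : Q ⟶ B}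
    {q₂ : Q ⟶ 𝓤.obj i} {pA : A ⟶ U} {pB : B ⟶ U} {s : A ⟶ B} (hs : pA = s ≫ pB)
    (hP : IsPullback p₁ p₂ pA (φ.app i)) (hQ : IsPullback q₁ q₂ pB (φ.app i))
    {k : P ⟶ Q} (h1 : k ≫ q₁ = p₁ ≫ s) (h2 : k ≫ q₂ = p₂) :
    IsPullback k p₁ q₁ s :=
  IsPullback.of_right (by rw [h2, ← hs]; exact hP.flip) h1 hQ.flip

/-- A comparison square between pullbacks of two different components of `φ` is a pullback. -/
theorem DPO.sq_pb' {A P Q : C} {i i' : J} (f : i ⟶ i') {p₁ : P ⟶ A} {p₂ : P ⟶ 𝓤.obj i}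
    {q₁ : Q ⟶ A} {q₂ : Q ⟶ 𝓤.obj i'} {pA : A ⟶ U}
    (hP : IsPullback p₁ p₂ pA (φ.app i)) (hQ : IsPullback q₁ q₂ pA (φ.app i'))
    {k : P ⟶ Q} (h1 : k ≫ q₁ = p₁) (h2 : k ≫ q₂ = p₂ ≫ 𝓤.map f) :
    IsPullback k p₂ q₂ (𝓤.map f) := by
  refine IsPullback.of_right ?_ h2 hQ
  rw [h1]
  have : 𝓤.map f ≫ φ.app i' = φ.app i := by simpa using φ.naturality f
  rw [this]
  exact hP

/-- The projection to `𝓤` is equifibered. -/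
theorem DPO.pbSnd_equifibered {V : C} (p : V ⟶ U) : NatTrans.Equifibered (DPO.pbSnd 𝓤 φ p) :=
  fun i i' f => DPO.sq_pb' 𝓤 φ f (IsPullback.of_hasPullback p (φ.app i))
    (IsPullback.of_hasPullback p (φ.app i')) (by simp) (by simp)

/-- Pullback-stability yields a colimit structure on each componentwise pullback. -/
theorem DPO.pb_colim (hφuniv : IsUniversalColimit (⟨U, φ⟩ : Cocone 𝓤)) {V : C} (p : V ⟶ U) :
    Nonempty (IsColimit (⟨V, DPO.pbCone 𝓤 φ p⟩ : Cocone (DPO.pbF 𝓤 φ p))) := by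
  refine hφuniv ⟨V, DPO.pbCone 𝓤 φ p⟩ (DPO.pbSnd 𝓤 φ p) p ?_ (DPO.pbSnd_equifibered 𝓤 φ p)
    (fun i => IsPullback.of_hasPullback p (φ.app i))
  ext i
  simpa using pullback.condition.symm

end DPOAux

/-- Global decomposition for double pushout rewriting: a double pushout
transformation diagram can be decomposed along a pullback-stable colimit decomposition of
an object `U` assembling the whole transformation, pulled back to `X`. -/
theorem dpo_global_decomposition
    {C : Type*} [Category C] [Adhesive C] [HasPullbacks C]
    {J : Type*} [Category J]
    {L K R X Y Z : C}
    (a : K ⟶ L) (b : K ⟶ R) (m : L ⟶ X) (j : K ⟶ Y) (n : R ⟶ Z) (c : Y ⟶ X) (d : Y ⟶ Z)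
    [Mono a] [Mono b]
    (hpo₁ : IsPushout a j m c) (hpo₂ : IsPushout j b d n)
    {U : C} (w : X ⟶ U) (t : Z ⟶ U) (hwt : c ≫ w = d ≫ t)
    (𝓤 : J ⥤ C) (φ : 𝓤 ⟶ (Functor.const J).obj U)
    (hφcolim : Nonempty (IsColimit (⟨U, φ⟩ : Cocone 𝓤)))
    (hφuniv : IsUniversalColimit (⟨U, φ⟩ : Cocone 𝓤))
    (𝓧 : J ⥤ C) (ξ : 𝓧 ⟶ (Functor.const J).obj X)
    (ω : 𝓧 ⟶ 𝓤)
    (hω : ∀ i : J, IsPullback (ξ.app i) (ω.app i) w (φ.app i)) :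
    ∃ (𝓛 𝓚 𝓡 𝓨 𝓩 : J ⥤ C)
      (α : 𝓚 ⟶ 𝓛) (β : 𝓚 ⟶ 𝓡) (ι : 𝓚 ⟶ 𝓨) (μ : 𝓛 ⟶ 𝓧) (γ : 𝓨 ⟶ 𝓧)
      (ν : 𝓡 ⟶ 𝓩) (δ : 𝓨 ⟶ 𝓩)
      (lamL : 𝓛 ⟶ (Functor.const J).obj L) (κ : 𝓚 ⟶ (Functor.const J).obj K)
      (ρ : 𝓡 ⟶ (Functor.const J).obj R) (υ : 𝓨 ⟶ (Functor.const J).obj Y)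
      (ζ : 𝓩 ⟶ (Functor.const J).obj Z),
      Nonempty (IsColimit (⟨L, lamL⟩ : Cocone 𝓛)) ∧
      Nonempty (IsColimit (⟨K, κ⟩ : Cocone 𝓚)) ∧
      Nonempty (IsColimit (⟨R, ρ⟩ : Cocone 𝓡)) ∧
      Nonempty (IsColimit (⟨Y, υ⟩ : Cocone 𝓨)) ∧
      Nonempty (IsColimit (⟨Z, ζ⟩ : Cocone 𝓩)) ∧
      Nonempty (IsColimit (⟨X, ξ⟩ : Cocone 𝓧)) ∧
      α ≫ μ = ι ≫ γ ∧ β ≫ ν = ι ≫ δ ∧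
      (∀ i : J, IsPushout (α.app i) (ι.app i) (μ.app i) (γ.app i)) ∧
      (∀ i : J, IsPushout (ι.app i) (β.app i) (δ.app i) (ν.app i)) ∧
      -- the induced morphisms on colimits are the original ones:
      α ≫ lamL = κ ≫ (Functor.const J).map a ∧
      β ≫ ρ = κ ≫ (Functor.const J).map b ∧
      μ ≫ ξ = lamL ≫ (Functor.const J).map m ∧
      ι ≫ υ = κ ≫ (Functor.const J).map j ∧
      ν ≫ ζ = ρ ≫ (Functor.const J).map n ∧
      γ ≫ ξ = υ ≫ (Functor.const J).map c ∧
      δ ≫ ζ = υ ≫ (Functor.const J).map d := by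
  have hKj : a ≫ m ≫ w = j ≫ c ≫ w := by
    rw [← Category.assoc, hpo₁.w, Category.assoc]
  have hKey : a ≫ m ≫ w = b ≫ n ≫ t := by
    rw [hKj, hwt, ← Category.assoc, hpo₂.w, Category.assoc]
  have hξn : ∀ {i i' : J} (f : i ⟶ i'), 𝓧.map f ≫ ξ.app i' = ξ.app i := by
    intro i i' f; simpa using ξ.naturality f
  -- the back and front faces of the two cubes are pullbacks
  have face_α : ∀ i : J, IsPullback ((DPO.pbHom 𝓤 φ a (rfl : a ≫ m ≫ w = a ≫ m ≫ w)).app i)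
      (pullback.fst _ _) (pullback.fst _ _) a :=
    fun i => DPO.sq_pb 𝓤 φ rfl (IsPullback.of_hasPullback _ _) (IsPullback.of_hasPullback _ _)
      (by simp) (by simp)
  have face_β : ∀ i : J, IsPullback ((DPO.pbHom 𝓤 φ b hKey).app i)
      (pullback.fst _ _) (pullback.fst _ _) b :=
    fun i => DPO.sq_pb 𝓤 φ hKey (IsPullback.of_hasPullback _ _) (IsPullback.of_hasPullback _ _)
      (by simp) (by simp)
  have face_ι : ∀ i : J, IsPullback ((DPO.pbHom 𝓤 φ j hKj).app i)
      (pullback.fst _ _) (pullback.fst _ _) j :=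
    fun i => DPO.sq_pb 𝓤 φ hKj (IsPullback.of_hasPullback _ _) (IsPullback.of_hasPullback _ _)
      (by simp) (by simp)
  have face_ν : ∀ i : J, IsPullback ((DPO.pbHom 𝓤 φ n (rfl : n ≫ t = n ≫ t)).app i)
      (pullback.fst _ _) (pullback.fst _ _) n :=
    fun i => DPO.sq_pb 𝓤 φ rfl (IsPullback.of_hasPullback _ _) (IsPullback.of_hasPullback _ _)
      (by simp) (by simp)
  have face_δ : ∀ i : J, IsPullback ((DPO.pbHom 𝓤 φ d hwt).app i)
      (pullback.fst _ _) (pullback.fst _ _) d :=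
    fun i => DPO.sq_pb 𝓤 φ hwt (IsPullback.of_hasPullback _ _) (IsPullback.of_hasPullback _ _)
      (by simp) (by simp)
  have face_μ : ∀ i : J, IsPullback ((DPO.pbTo 𝓤 φ hω m).app i)
      (pullback.fst _ _) (ξ.app i) m :=
    fun i => DPO.sq_pb 𝓤 φ rfl (IsPullback.of_hasPullback _ _) (hω i)
      (DPO.pbTo_app_fst 𝓤 φ hω m i) (DPO.pbTo_app_snd 𝓤 φ hω m i)
  have face_γ : ∀ i : J, IsPullback ((DPO.pbTo 𝓤 φ hω c).app i)
      (pullback.fst _ _) (ξ.app i) c :=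
    fun i => DPO.sq_pb 𝓤 φ rfl (IsPullback.of_hasPullback _ _) (hω i)
      (DPO.pbTo_app_fst 𝓤 φ hω c i) (DPO.pbTo_app_snd 𝓤 φ hω c i)
  -- commutativity of the top faces
  have comm1 : ∀ i : J, (DPO.pbHom 𝓤 φ a (rfl : a ≫ m ≫ w = a ≫ m ≫ w)).app i ≫
      (DPO.pbTo 𝓤 φ hω m).app i =
      (DPO.pbHom 𝓤 φ j hKj).app i ≫ (DPO.pbTo 𝓤 φ hω c).app i := by
    intro i
    apply (hω i).hom_ext
    · simp [hpo₁.w]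
    · simp
  have comm2 : ∀ i : J, (DPO.pbHom 𝓤 φ b hKey).app i ≫
      (DPO.pbHom 𝓤 φ n (rfl : n ≫ t = n ≫ t)).app i =
      (DPO.pbHom 𝓤 φ j hKj).app i ≫ (DPO.pbHom 𝓤 φ d hwt).app i := by
    intro i
    apply pullback.hom_ext
    · simp [hpo₂.w]
    · simp
  -- the componentwise squares are pushouts, by the van Kampen property
  have push1 : ∀ i : J, IsPushout ((DPO.pbHom 𝓤 φ a rfl).app i) ((DPO.pbHom 𝓤 φ j hKj).app i)
      ((DPO.pbTo 𝓤 φ hω m).app i) ((DPO.pbTo 𝓤 φ hω c).app i) := fun i =>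
    ((Adhesive.van_kampen hpo₁) _ _ _ _
      (pullback.fst _ _) (pullback.fst _ _) (pullback.fst _ _) (ξ.app i)
      (face_α i) (face_ι i) (face_μ i).toCommSq (face_γ i).toCommSq ⟨comm1 i⟩).mpr
      ⟨face_μ i, face_γ i⟩
  have push2 : ∀ i : J, IsPushout ((DPO.pbHom 𝓤 φ j hKj).app i) ((DPO.pbHom 𝓤 φ b hKey).app i)
      ((DPO.pbHom 𝓤 φ d hwt).app i) ((DPO.pbHom 𝓤 φ n rfl).app i) := fun i =>
    (((Adhesive.van_kampen hpo₂.flip) _ _ _ _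
      (pullback.fst _ _) (pullback.fst _ _) (pullback.fst _ _) (pullback.fst _ _)
      (face_β i) (face_ι i) (face_ν i).toCommSq (face_δ i).toCommSq ⟨comm2 i⟩).mpr
      ⟨face_ν i, face_δ i⟩).flip
  -- the colimit of 𝓧 itself
  have colimX : Nonempty (IsColimit (⟨X, ξ⟩ : Cocone 𝓧)) := by
    refine hφuniv ⟨X, ξ⟩ ω w ?_
      (fun i i' f => DPO.sq_pb' 𝓤 φ f (hω i) (hω i') (hξn f) (ω.naturality f)) hω
    ext i
    simpa using (hω i).w.symm
  refine ⟨DPO.pbF 𝓤 φ (m ≫ w), DPO.pbF 𝓤 φ (a ≫ m ≫ w), DPO.pbF 𝓤 φ (n ≫ t),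
    DPO.pbF 𝓤 φ (c ≫ w), DPO.pbF 𝓤 φ t,
    DPO.pbHom 𝓤 φ a rfl, DPO.pbHom 𝓤 φ b hKey, DPO.pbHom 𝓤 φ j hKj,
    DPO.pbTo 𝓤 φ hω m, DPO.pbTo 𝓤 φ hω c, DPO.pbHom 𝓤 φ n rfl, DPO.pbHom 𝓤 φ d hwt,
    DPO.pbCone 𝓤 φ (m ≫ w), DPO.pbCone 𝓤 φ (a ≫ m ≫ w), DPO.pbCone 𝓤 φ (n ≫ t),
    DPO.pbCone 𝓤 φ (c ≫ w), DPO.pbCone 𝓤 φ t,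
    DPO.pb_colim 𝓤 φ hφuniv _, DPO.pb_colim 𝓤 φ hφuniv _, DPO.pb_colim 𝓤 φ hφuniv _,
    DPO.pb_colim 𝓤 φ hφuniv _, DPO.pb_colim 𝓤 φ hφuniv _, colimX,
    ?_, ?_, push1, push2, ?_, ?_, ?_, ?_, ?_, ?_, ?_⟩
  · ext i; exact comm1 i
  · exact NatTrans.ext (funext fun i => comm2 i)
  · ext i; simp
  · ext i; simp
  · ext i; simp
  · ext i; simp
  · ext i; simp
  · ext i; simp
  · ext i; simp
end

section
/- (Accommodated Completeness Theorem.) Let C be an adhesive category and J a category. Suppose given: a functor 𝓧 : J ⥤ C with a pullback-stable (universal) colimit cocone ξ : 𝓧 ⟶ Δ X; a rule L ←a− K −b→ R with a a monomorphism; a double pushout transformation diagram for this rule with match m : L → X (i.e. morphisms j : K → Y, n : R → Z, c : Y → X, d : Y → Z making the two DPO pushout squares); the additional assumption that at least one of m and b is a monomorphism; and an accommodation, namely a functor 𝓡 : J ⥤ C with a pullback-stable (universal) colimit cocone ρ : 𝓡 ⟶ Δ R such that pulling back ρ along b and pulling back ξ along m ∘ a yield isomorphic results, i.e. there exist a functor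 𝓚' : J ⥤ C, a cocone θ : 𝓚' ⟶ Δ K, and natural transformations σ : 𝓚' ⟶ 𝓡 and χ : 𝓚' ⟶ 𝓧 such that for every object i of J the squares b ∘ θ_i = ρ_i ∘ σ_i and (m ∘ a) ∘ θ_i = ξ_i ∘ χ_i are pullbacks. Then the local decomposition problem has a solution: there exist functors 𝓛, 𝓚, 𝓨, 𝓩 : J ⥤ C, natural transformations α : 𝓚 ⟶ 𝓛, β : 𝓚 ⟶ 𝓡, μ : 𝓛 ⟶ 𝓧, ι : 𝓚 ⟶ 𝓨, ν : 𝓡 ⟶ 𝓩, γ : 𝓨 ⟶ 𝓧, δ : 𝓨 ⟶ 𝓩 with μ ∘ α = γ ∘ ι and ν ∘ β = δ ∘ ι, and colimit cocones of 𝓛, 𝓚, 𝓨, 𝓩 with apexes L, K, Y', Z' for some objects Y', Z', such that colim μ = m, colim α = a and colim β = b (computed with respect to the given colimit cocones ξ and ρ), and for every object i of J the component diagram (rule 𝓛_i ←α_i− 𝓚_i −β_i→ 𝓡_i with morphisms μ_i, ι_i, ν_i, γ_i, δ_i) is a double pushout transformation diagram in C. -/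
open CategoryTheory CategoryTheory.Limits

noncomputable section

namespace AccAux

variable {J : Type*} [Category J] {C : Type*} [Category C]

section PB

variable [HasPullbacks C] {X Lc : C} (𝓧 : J ⥤ C) (ξ : 𝓧 ⟶ (Functor.const J).obj X) (m : Lc ⟶ X)

/-- The pointwise pullback of a cocone leg family along `m`. -/
@[simps]
def pbF : J ⥤ C where
  obj i := pullback m (ξ.app i)
  map {i i'} f := pullback.map m (ξ.app i) m (ξ.app i') (𝟙 Lc) (𝓧.map f) (𝟙 X)
    (by simp) (by simpa using (ξ.naturality f).symm)
  map_id i := by apply pullback.hom_ext <;> simp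
  map_comp f g := by apply pullback.hom_ext <;> simp [pullback.lift_fst, pullback.lift_snd, pullback.lift_fst_assoc, pullback.lift_snd_assoc, pullback.map]

@[simps]
def pbFst : pbF 𝓧 ξ m ⟶ (Functor.const J).obj Lc where
  app i := pullback.fst m (ξ.app i)
  naturality i i' f := pullback.lift_fst _ _ _

@[simps]
def pbSnd : pbF 𝓧 ξ m ⟶ 𝓧 where
  app i := pullback.snd m (ξ.app i)
  naturality i i' f := pullback.lift_snd _ _ _

theorem pb_isPullback (i : J) :
    IsPullback ((pbFst 𝓧 ξ m).app i) ((pbSnd 𝓧 ξ m).app i) m (ξ.app i) :=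
  IsPullback.of_hasPullback m (ξ.app i)

@[simps]
def pbLift {F : J ⥤ C} (t : F ⟶ (Functor.const J).obj Lc) (s : F ⟶ 𝓧)
    (w : ∀ i, t.app i ≫ m = s.app i ≫ ξ.app i) : F ⟶ pbF 𝓧 ξ m where
  app i := pullback.lift (t.app i) (s.app i) (w i)
  naturality i i' f := by
    apply pullback.hom_ext
    · erw [Category.assoc, Category.assoc, pullback.lift_fst, pullback.lift_fst, pullback.lift_fst_assoc]
      exact t.naturality f
    · erw [Category.assoc, Category.assoc, pullback.lift_snd, pullback.lift_snd, pullback.lift_snd_assoc]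
      exact s.naturality f

end PB

theorem equifibered_of_comp {F G : J ⥤ C} (τ : F ⟶ G) {Lc X : C}
    (lam : F ⟶ (Functor.const J).obj Lc) (ξ : G ⟶ (Functor.const J).obj X)
    (m : Lc ⟶ X) (H : ∀ i, IsPullback (lam.app i) (τ.app i) m (ξ.app i)) :
    NatTrans.Equifibered τ := by
  intro i i' f
  have h1 : F.map f ≫ lam.app i' = lam.app i := by simpa using (lam.naturality f)
  have h2 : G.map f ≫ ξ.app i' = ξ.app i := by simpa using (ξ.naturality f)
  exact IsPullback.of_right (by rw [h1, h2]; exact H i) (τ.naturality f) (H i')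

theorem mono_snd_of_isPullback {P Xo Yo Zo : C} {fst : P ⟶ Xo} {snd : P ⟶ Yo}
    {f : Xo ⟶ Zo} {g : Yo ⟶ Zo} (h : IsPullback fst snd f g) [Mono f] : Mono snd :=
  PullbackCone.mono_snd_of_is_pullback_of_mono h.isLimit

theorem mono_fst_of_isPullback {P Xo Yo Zo : C} {fst : P ⟶ Xo} {snd : P ⟶ Yo}
    {f : Xo ⟶ Zo} {g : Yo ⟶ Zo} (h : IsPullback fst snd f g) [Mono g] : Mono fst :=
  PullbackCone.mono_fst_of_is_pullback_of_mono h.isLimit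

section PO

variable {F G H : J ⥤ C} (p : F ⟶ G) (q : F ⟶ H) (hpo : ∀ i, HasPushout (p.app i) (q.app i))

/-- Pointwise pushout of a span of natural transformations. -/
@[simps]
def poF : J ⥤ C where
  obj i := letI := hpo i; pushout (p.app i) (q.app i)
  map {i i'} f := letI := hpo i; letI := hpo i'
    pushout.map (p.app i) (q.app i) (p.app i') (q.app i') (G.map f) (H.map f) (F.map f)
      (p.naturality f).symm (q.naturality f).symm
  map_id i := by letI := hpo i; apply pushout.hom_ext <;> simp
  map_comp {i i' i''} f g := by
    letI := hpo i; letI := hpo i'; letI := hpo i''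
    apply pushout.hom_ext <;> simp [pushout.inl_desc, pushout.inr_desc, pushout.inl_desc_assoc, pushout.inr_desc_assoc, pushout.map]

@[simps]
def poInl : G ⟶ poF p q hpo where
  app i := letI := hpo i; pushout.inl _ _
  naturality i i' f := by letI := hpo i; letI := hpo i'; exact (pushout.inl_desc _ _ _).symm

@[simps]
def poInr : H ⟶ poF p q hpo where
  app i := letI := hpo i; pushout.inr _ _
  naturality i i' f := by letI := hpo i; letI := hpo i'; exact (pushout.inr_desc _ _ _).symm

theorem po_isPushout (i : J) :
    IsPushout (p.app i) (q.app i) ((poInl p q hpo).app i) ((poInr p q hpo).app i) :=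
  letI := hpo i; IsPushout.of_hasPushout _ _

@[simps]
def poDesc {W : C} (u : G ⟶ (Functor.const J).obj W) (v : H ⟶ (Functor.const J).obj W)
    (w : ∀ i, p.app i ≫ u.app i = q.app i ≫ v.app i) :
    poF p q hpo ⟶ (Functor.const J).obj W where
  app i := letI := hpo i; pushout.desc (u.app i) (v.app i) (w i)
  naturality i i' f := by
    letI := hpo i; letI := hpo i'
    apply pushout.hom_ext
    · erw [pushout.inl_desc_assoc, Category.assoc, pushout.inl_desc, pushout.inl_desc_assoc, Category.comp_id]
      exact (u.naturality f).trans (Category.comp_id _)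
    · erw [pushout.inr_desc_assoc, Category.assoc, pushout.inr_desc, pushout.inr_desc_assoc, Category.comp_id]
      exact (v.naturality f).trans (Category.comp_id _)

end PO

end AccAux

end

/-- Accommodated Completeness Theorem: in an adhesive category, a local
decomposition problem equipped with an accommodation has a solution. -/
theorem accommodated_completeness
    {C : Type*} [Category C] [Adhesive C] [HasPullbacks C]
    {J : Type*} [Category J]
    -- a pullback-stable colimit decomposition of the state X
    {X : C} (𝓧 : J ⥤ C) (ξ : 𝓧 ⟶ (Functor.const J).obj X)
    (hξcolim : Nonempty (IsColimit (⟨X, ξ⟩ : Cocone 𝓧)))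
    (hξuniv : IsUniversalColimit (⟨X, ξ⟩ : Cocone 𝓧))
    -- a rule with a mono, and a DPO transformation at match m
    {L K R Y Z : C} (a : K ⟶ L) (b : K ⟶ R) [Mono a]
    (m : L ⟶ X) (j : K ⟶ Y) (n : R ⟶ Z) (c : Y ⟶ X) (d : Y ⟶ Z)
    (hpo₁ : IsPushout a j m c) (hpo₂ : IsPushout j b d n)
    (hmb : Mono m ∨ Mono b)
    -- an accommodation: a pullback-stable colimit decomposition of R such that pulling
    -- back ρ along b and pulling back ξ along m ∘ a yield isomorphic results
    (𝓡 : J ⥤ C) (ρ : 𝓡 ⟶ (Functor.const J).obj R)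
    (hρcolim : Nonempty (IsColimit (⟨R, ρ⟩ : Cocone 𝓡)))
    (hρuniv : IsUniversalColimit (⟨R, ρ⟩ : Cocone 𝓡))
    (𝓚' : J ⥤ C) (θ : 𝓚' ⟶ (Functor.const J).obj K)
    (σ : 𝓚' ⟶ 𝓡) (χ : 𝓚' ⟶ 𝓧)
    (hσ : ∀ i : J, IsPullback (θ.app i) (σ.app i) b (ρ.app i))
    (hχ : ∀ i : J, IsPullback (θ.app i) (χ.app i) (a ≫ m) (ξ.app i)) :
    -- the solution of the local decomposition problem
    ∃ (𝓛 𝓚 𝓨 𝓩 : J ⥤ C)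
      (α : 𝓚 ⟶ 𝓛) (β : 𝓚 ⟶ 𝓡) (μ : 𝓛 ⟶ 𝓧) (ι : 𝓚 ⟶ 𝓨) (ν : 𝓡 ⟶ 𝓩)
      (γ : 𝓨 ⟶ 𝓧) (δ : 𝓨 ⟶ 𝓩)
      (lamL : 𝓛 ⟶ (Functor.const J).obj L) (κ : 𝓚 ⟶ (Functor.const J).obj K)
      (Y' Z' : C) (υ : 𝓨 ⟶ (Functor.const J).obj Y') (ζ : 𝓩 ⟶ (Functor.const J).obj Z'),
      Nonempty (IsColimit (⟨L, lamL⟩ : Cocone 𝓛)) ∧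
      Nonempty (IsColimit (⟨K, κ⟩ : Cocone 𝓚)) ∧
      Nonempty (IsColimit (⟨Y', υ⟩ : Cocone 𝓨)) ∧
      Nonempty (IsColimit (⟨Z', ζ⟩ : Cocone 𝓩)) ∧
      α ≫ μ = ι ≫ γ ∧ β ≫ ν = ι ≫ δ ∧
      -- colim μ = m, colim α = a, colim β = b (w.r.t. the given cocones ξ and ρ):
      μ ≫ ξ = lamL ≫ (Functor.const J).map m ∧
      α ≫ lamL = κ ≫ (Functor.const J).map a ∧
      β ≫ ρ = κ ≫ (Functor.const J).map b ∧
      -- each component diagram is a double pushout transformation diagram: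
      (∀ i : J, IsPushout (α.app i) (ι.app i) (μ.app i) (γ.app i)) ∧
      (∀ i : J, IsPushout (ι.app i) (β.app i) (δ.app i) (ν.app i)) := by
  obtain ⟨hRcol⟩ := hρcolim
  -- the pointwise pullback functors
  let 𝓛 : J ⥤ C := AccAux.pbF 𝓧 ξ m
  let 𝓨 : J ⥤ C := AccAux.pbF 𝓧 ξ c
  let lamL : 𝓛 ⟶ (Functor.const J).obj L := AccAux.pbFst 𝓧 ξ m
  let μ : 𝓛 ⟶ 𝓧 := AccAux.pbSnd 𝓧 ξ m
  let υ : 𝓨 ⟶ (Functor.const J).obj Y := AccAux.pbFst 𝓧 ξ c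
  let γ : 𝓨 ⟶ 𝓧 := AccAux.pbSnd 𝓧 ξ c
  have hL : ∀ i, IsPullback (lamL.app i) (μ.app i) m (ξ.app i) := AccAux.pb_isPullback 𝓧 ξ m
  have hYpb : ∀ i, IsPullback (υ.app i) (γ.app i) c (ξ.app i) := AccAux.pb_isPullback 𝓧 ξ c
  -- the induced transformations into the pullbacks
  let α : 𝓚' ⟶ 𝓛 := AccAux.pbLift 𝓧 ξ m (θ ≫ (Functor.const J).map a) χ
    (fun i => by simpa [Category.assoc] using (hχ i).w)
  let ι : 𝓚' ⟶ 𝓨 := AccAux.pbLift 𝓧 ξ c (θ ≫ (Functor.const J).map j) χ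
    (fun i => by rw [NatTrans.comp_app, Functor.const_map_app, Category.assoc, ← hpo₁.w]
                 exact (hχ i).w)
  have hαfst : ∀ i, α.app i ≫ lamL.app i = θ.app i ≫ a := fun i => by
    exact pullback.lift_fst _ _ _
  have hαsnd : ∀ i, α.app i ≫ μ.app i = χ.app i := fun i => by
    exact pullback.lift_snd _ _ _
  have hιfst : ∀ i, ι.app i ≫ υ.app i = θ.app i ≫ j := fun i => by
    exact pullback.lift_fst _ _ _
  have hιsnd : ∀ i, ι.app i ≫ γ.app i = χ.app i := fun i => by
    exact pullback.lift_snd _ _ _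
  -- back faces of the cube are pullbacks
  have hαpb : ∀ i, IsPullback (α.app i) (θ.app i) (lamL.app i) a := by
    intro i
    refine IsPullback.of_right ?_ (by rw [hαfst i]) ((hL i).flip)
    rw [hαsnd i]
    exact (hχ i).flip
  have hιpb : ∀ i, IsPullback (ι.app i) (θ.app i) (υ.app i) j := by
    intro i
    refine IsPullback.of_right ?_ (by rw [hιfst i]) ((hYpb i).flip)
    rw [hιsnd i, ← hpo₁.w]
    exact (hχ i).flip
  -- van Kampen gives the first DPO squares
  have hDPO1 : ∀ i, IsPushout (α.app i) (ι.app i) (μ.app i) (γ.app i) := by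
    intro i
    exact (Adhesive.van_kampen hpo₁ (α.app i) (ι.app i) (μ.app i) (γ.app i)
      (θ.app i) (lamL.app i) (υ.app i) (ξ.app i) (hαpb i) (hιpb i)
      (hL i).flip.toCommSq (hYpb i).flip.toCommSq
      ⟨by rw [hαsnd i, hιsnd i]⟩).mpr ⟨(hL i).flip, (hYpb i).flip⟩
  -- the pointwise pushouts exist
  have hpoZ : ∀ i, HasPushout (ι.app i) (σ.app i) := by
    rcases hmb with hm | hb
    · have hpb1 : IsPullback a j m c := Adhesive.isPullback_of_isPushout_of_mono_left hpo₁
      have hj : Mono j := AccAux.mono_snd_of_isPullback hpb1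
      intro i
      have : Mono (ι.app i) := AccAux.mono_fst_of_isPullback (hιpb i)
      exact @Adhesive.hasPushout_of_mono_left _ _ _ _ _ _ (ι.app i) (σ.app i) this
    · intro i
      have : Mono (σ.app i) := AccAux.mono_snd_of_isPullback (hσ i)
      have h1 : HasPushout (σ.app i) (ι.app i) :=
        @Adhesive.hasPushout_of_mono_left _ _ _ _ _ _ (σ.app i) (ι.app i) this
      exact @hasPushout_symmetry _ _ _ _ _ _ _ h1
  let 𝓩 : J ⥤ C := AccAux.poF ι σ hpoZ
  let δ : 𝓨 ⟶ 𝓩 := AccAux.poInl ι σ hpoZ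
  let ν : 𝓡 ⟶ 𝓩 := AccAux.poInr ι σ hpoZ
  have hDPO2 : ∀ i, IsPushout (ι.app i) (σ.app i) (δ.app i) (ν.app i) :=
    AccAux.po_isPushout ι σ hpoZ
  let ζ : 𝓩 ⟶ (Functor.const J).obj Z := AccAux.poDesc ι σ hpoZ
    (υ ≫ (Functor.const J).map d) (ρ ≫ (Functor.const J).map n)
    (fun i => by
      rw [NatTrans.comp_app, NatTrans.comp_app, Functor.const_map_app, Functor.const_map_app,
        ← Category.assoc, hιfst i, Category.assoc, hpo₂.w, ← Category.assoc, (hσ i).w,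
        Category.assoc])
  have hζl : ∀ i, δ.app i ≫ ζ.app i = υ.app i ≫ d := fun i => by
    exact pushout.inl_desc _ _ _
  have hζr : ∀ i, ν.app i ≫ ζ.app i = ρ.app i ≫ n := fun i => by
    exact pushout.inr_desc _ _ _
  -- colimit cocones
  have hcolimL : Nonempty (IsColimit (⟨L, lamL⟩ : Cocone 𝓛)) := by
    refine hξuniv ⟨L, lamL⟩ μ m ?_ (AccAux.equifibered_of_comp μ lamL ξ m hL) hL
    ext i
    exact (hL i).w.symm
  have hcolimK : Nonempty (IsColimit (⟨K, θ⟩ : Cocone 𝓚')) := by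
    refine hξuniv ⟨K, θ⟩ χ (a ≫ m) ?_ (AccAux.equifibered_of_comp χ θ ξ (a ≫ m) hχ) hχ
    ext i
    exact (hχ i).w.symm
  have hcolimY : Nonempty (IsColimit (⟨Y, υ⟩ : Cocone 𝓨)) := by
    refine hξuniv ⟨Y, υ⟩ γ c ?_ (AccAux.equifibered_of_comp γ υ ξ c hYpb) hYpb
    ext i
    exact (hYpb i).w.symm
  obtain ⟨hKcol⟩ := hcolimK
  obtain ⟨hYcol⟩ := hcolimY
  have hcolimZ : Nonempty (IsColimit (⟨Z, ζ⟩ : Cocone 𝓩)) := by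
    constructor
    refine
      { desc := fun s => hpo₂.desc (hYcol.desc ((Cocone.precompose δ).obj s))
          (hRcol.desc ((Cocone.precompose ν).obj s)) ?_
        fac := ?_
        uniq := ?_ }
    · -- j ≫ yW = b ≫ rW
      apply hKcol.hom_ext
      intro i
      have e1 : υ.app i ≫ hYcol.desc ((Cocone.precompose δ).obj s) = δ.app i ≫ s.ι.app i :=
        hYcol.fac _ i
      have e2 : ρ.app i ≫ hRcol.desc ((Cocone.precompose ν).obj s) = ν.app i ≫ s.ι.app i :=
        hRcol.fac _ i
      calc θ.app i ≫ j ≫ hYcol.desc ((Cocone.precompose δ).obj s)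
          = (ι.app i ≫ υ.app i) ≫ hYcol.desc ((Cocone.precompose δ).obj s) := by
            rw [hιfst i, Category.assoc]
        _ = ι.app i ≫ δ.app i ≫ s.ι.app i := by rw [Category.assoc, e1]
        _ = σ.app i ≫ ν.app i ≫ s.ι.app i := by
            rw [← Category.assoc, (hDPO2 i).w, Category.assoc]
        _ = σ.app i ≫ ρ.app i ≫ hRcol.desc ((Cocone.precompose ν).obj s) := by rw [e2]
        _ = θ.app i ≫ b ≫ hRcol.desc ((Cocone.precompose ν).obj s) := by
            rw [← Category.assoc, ← (hσ i).w, Category.assoc]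
    · intro s i
      apply (hDPO2 i).hom_ext
      · rw [← Category.assoc, hζl i, Category.assoc, hpo₂.inl_desc]
        exact hYcol.fac _ i
      · rw [← Category.assoc, hζr i, Category.assoc, hpo₂.inr_desc]
        exact hRcol.fac _ i
    · intro s mw hw
      apply hpo₂.hom_ext
      · rw [hpo₂.inl_desc]
        apply hYcol.hom_ext
        intro i
        rw [← Category.assoc]
        calc (υ.app i ≫ d) ≫ mw = δ.app i ≫ ζ.app i ≫ mw := by
              rw [← Category.assoc, hζl i]
          _ = δ.app i ≫ s.ι.app i := by rw [hw i]
          _ = υ.app i ≫ hYcol.desc ((Cocone.precompose δ).obj s) :=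
              (hYcol.fac ((Cocone.precompose δ).obj s) i).symm
      · rw [hpo₂.inr_desc]
        apply hRcol.hom_ext
        intro i
        rw [← Category.assoc]
        calc (ρ.app i ≫ n) ≫ mw = ν.app i ≫ ζ.app i ≫ mw := by
              rw [← Category.assoc, hζr i]
          _ = ν.app i ≫ s.ι.app i := by rw [hw i]
          _ = ρ.app i ≫ hRcol.desc ((Cocone.precompose ν).obj s) :=
              (hRcol.fac ((Cocone.precompose ν).obj s) i).symm
  refine ⟨𝓛, 𝓚', 𝓨, 𝓩, α, σ, μ, ι, ν, γ, δ, lamL, θ, Y, Z, υ, ζ,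
    hcolimL, ⟨hKcol⟩, ⟨hYcol⟩, hcolimZ, ?_, ?_, ?_, ?_, ?_, hDPO1, hDPO2⟩
  · ext i
    rw [NatTrans.comp_app, NatTrans.comp_app, hαsnd i, hιsnd i]
  · ext i
    exact (hDPO2 i).w.symm
  · ext i
    exact (hL i).w.symm
  · ext i
    exact hαfst i
  · ext i
    exact (hσ i).w.symm
end

section
/- Let C be a category with pullbacks and J a category. Let 𝓛 : J ⥤ C be a functor with a Van Kampen colimit cocone λ : 𝓛 ⟶ Δ L, let α : 𝓚 ⟶ 𝓛 be a cartesian natural transformation such that every component α_i : 𝓚_i → 𝓛_i is a monomorphism, and let κ : 𝓚 ⟶ Δ K be a colimit cocone of 𝓚. Then the induced morphism colim α : K → L (the unique morphism t with λ ∘ α = Δt ∘ κ) is a monomorphism. -/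
open CategoryTheory CategoryTheory.Limits

/-- in a category with pullbacks, the morphism induced on colimits by a
cartesian (equifibered) natural transformation with monomorphic components into a diagram
with a Van Kampen colimit is a monomorphism. -/
theorem mono_colimMap_of_vanKampen
    {C : Type*} [Category C] [HasPullbacks C]
    {J : Type*} [Category J]
    {𝓛 𝓚 : J ⥤ C} {L K : C}
    (lam : 𝓛 ⟶ (Functor.const J).obj L)
    (hlam : IsVanKampenColimit (⟨L, lam⟩ : Cocone 𝓛))
    (α : 𝓚 ⟶ 𝓛) (hα : NatTrans.Equifibered α) (hmono : ∀ i : J, Mono (α.app i))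
    (κ : 𝓚 ⟶ (Functor.const J).obj K)
    (hκ : IsColimit (⟨K, κ⟩ : Cocone 𝓚)) :
    Mono (hκ.desc ((Cocone.precompose α).obj (⟨L, lam⟩ : Cocone 𝓛))) := by
  set t := hκ.desc ((Cocone.precompose α).obj (⟨L, lam⟩ : Cocone 𝓛)) with ht
  have hfac : ∀ j : J, κ.app j ≫ t = α.app j ≫ lam.app j := fun j =>
    hκ.fac ((Cocone.precompose α).obj (⟨L, lam⟩ : Cocone 𝓛)) j
  have hcomm : α ≫ lam = κ ≫ (Functor.const J).map t := by
    ext j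
    simpa using (hfac j).symm
  -- Van Kampen forward direction: each square is a pullback.
  have hsq : ∀ j : J, IsPullback (κ.app j) (α.app j) t (lam.app j) :=
    (hlam (⟨K, κ⟩ : Cocone 𝓚) α t hcomm hα).mp ⟨hκ⟩
  -- Build the cocone into the pullback of t with itself.
  let P : C := pullback t t
  let μ : 𝓚 ⟶ (Functor.const J).obj P :=
    { app := fun j => pullback.lift (κ.app j) (κ.app j) rfl
      naturality := fun i j f => by
        apply pullback.hom_ext
        · exact (Category.assoc _ _ _).trans
            ((congrArg (fun x => 𝓚.map f ≫ x) (pullback.lift_fst (f := t) (g := t) (κ.app j) (κ.app j) rfl)).trans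
            ((κ.naturality f).trans ((Category.comp_id _).trans
            ((pullback.lift_fst (f := t) (g := t) (κ.app i) (κ.app i) rfl).symm.trans
            (congrArg (· ≫ pullback.fst t t) (Category.comp_id _).symm)))))
        · exact (Category.assoc _ _ _).trans
            ((congrArg (fun x => 𝓚.map f ≫ x) (pullback.lift_snd (f := t) (g := t) (κ.app j) (κ.app j) rfl)).trans
            ((κ.naturality f).trans ((Category.comp_id _).trans
            ((pullback.lift_snd (f := t) (g := t) (κ.app i) (κ.app i) rfl).symm.trans
            (congrArg (· ≫ pullback.snd t t) (Category.comp_id _).symm))))) }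
  have hμfst : ∀ j : J, μ.app j ≫ pullback.fst t t = κ.app j := fun j => pullback.lift_fst _ _ _
  have hμsnd : ∀ j : J, μ.app j ≫ pullback.snd t t = κ.app j := fun j => pullback.lift_snd _ _ _
  have hcomm' : α ≫ lam = μ ≫ (Functor.const J).map (pullback.fst t t ≫ t) := by
    ext j
    simp only [NatTrans.comp_app, Functor.const_map_app, Functor.const_obj_obj]
    rw [← Category.assoc, hμfst j, hfac j]
  -- each square for μ is a pullback
  have hPsq : ∀ j : J, IsPullback (μ.app j) (α.app j) (pullback.fst t t ≫ t) (lam.app j) := by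
    intro j
    have hc : μ.app j ≫ pullback.fst t t ≫ t = α.app j ≫ lam.app j := by
      rw [← Category.assoc, hμfst j, hfac j]
    refine ⟨⟨hc⟩, ⟨PullbackCone.IsLimit.mk _ (fun s =>
      (hsq j).lift (s.fst ≫ pullback.fst t t) s.snd (by rw [Category.assoc]; exact s.condition))
      ?_ ?_ ?_⟩⟩
    · intro s
      have hu' : (s.fst ≫ pullback.snd t t) ≫ t = s.snd ≫ lam.app j := by
        rw [Category.assoc, ← pullback.condition, ← Category.assoc, Category.assoc]
        exact s.condition
      have heq : (hsq j).lift (s.fst ≫ pullback.fst t t) s.snd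
            (by rw [Category.assoc]; exact s.condition)
          = (hsq j).lift (s.fst ≫ pullback.snd t t) s.snd hu' := by
        have := hmono j
        rw [← cancel_mono (α.app j)]
        simp [IsPullback.lift_snd]
      apply pullback.hom_ext
      · rw [Category.assoc, hμfst j, IsPullback.lift_fst]
      · beta_reduce
        rw [Category.assoc, hμsnd j, heq, IsPullback.lift_fst]
    · intro s
      exact (hsq j).lift_snd _ _ _
    · intro s m hm1 hm2
      have := hmono j
      rw [← cancel_mono (α.app j), hm2, IsPullback.lift_snd]
  -- Van Kampen backward direction: μ is a colimit cocone.
  obtain ⟨hμcolim⟩ := (hlam (⟨P, μ⟩ : Cocone 𝓚) α (pullback.fst t t ≫ t) hcomm' hα).mpr hPsq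
  have hpq : pullback.fst t t = pullback.snd t t := by
    apply hμcolim.hom_ext
    intro j
    simp only
    rw [hμfst j, hμsnd j]
  constructor
  intro Z g h hgh
  have : pullback.lift g h hgh ≫ pullback.fst t t = pullback.lift g h hgh ≫ pullback.snd t t := by
    rw [hpq]
  rw [pullback.lift_fst, pullback.lift_snd] at this
  exact this
end

section
/- (Object decomposition.) Let C be an adhesive category and let X be an object of C that is subobject-finite (its subobject poset Sub(X) is finite) and has a proper subobject. Then there exist a category J and a functor 𝓧 : J ⥤ C with a pullback-stable (universal) colimit cocone ξ : 𝓧 ⟶ Δ X such that for every object j of J the component ξ_j : 𝓧_j → X is a monomorphism and the object 𝓧_j either is an irreducible object or has no proper subobject. -/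
open CategoryTheory CategoryTheory.Limits

universe v u

variable {C : Type u} [Category.{v} C]

/-- A monomorphism `m : M ⟶ X` is proper if the identity of `X` is not included in it,
i.e. it does not represent the top subobject of `X`. -/
def ProperMono {M X : C} (m : M ⟶ X) : Prop :=
  Mono m ∧ ¬ ∃ f : X ⟶ M, f ≫ m = 𝟙 X

/-- An object has a proper subobject if some proper monomorphism into it exists. -/
def HasProperSubobject (X : C) : Prop :=
  ∃ (M : C) (m : M ⟶ X), ProperMono m

/-- An irreducible object: a subobject-finite object with a proper subobject such that in
every pushout cospan `(u, v)` of a span of monomorphisms, at most one of `u` and `v` is a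
proper monomorphism. -/
def IrreducibleObject (Y : C) : Prop :=
  Finite (Subobject Y) ∧ HasProperSubobject Y ∧
  ∀ {W U V : C} (wu : W ⟶ U) (wv : W ⟶ V) (u : U ⟶ Y) (v : V ⟶ Y),
    Mono wu → Mono wv → IsPushout wu wv u v → ¬(ProperMono u ∧ ProperMono v)

/-- A decomposition of an object `X` as a pullback-stable colimit of a diagram of
subobjects each of which is irreducible or has no proper subobject. -/
structure IrreducibleDecomposition (X : C) where
  /-- the shape of the decomposition -/
  J : Type (max u v)
  [instJ : Category.{v} J]
  /-- the diagram of components -/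
  diag : J ⥤ C
  /-- the colimit cocone -/
  ξ : diag ⟶ (Functor.const J).obj X
  isColimit : IsColimit (⟨X, ξ⟩ : Cocone diag)
  isUniversal : IsUniversalColimit (⟨X, ξ⟩ : Cocone diag)
  mono : ∀ j : J, Mono (ξ.app j)
  irred : ∀ j : J, IrreducibleObject (diag.obj j) ∨ ¬ HasProperSubobject (diag.obj j)

namespace ObjDecomp

theorem properMono_comp {A B X : C} (f : A ⟶ B) {g : B ⟶ X} [Mono f] (hg : ProperMono g) :
    ProperMono (f ≫ g) := by
  haveI : Mono g := hg.1
  refine ⟨inferInstance, ?_⟩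
  rintro ⟨s, hs⟩
  exact hg.2 ⟨s ≫ f, by simpa [Category.assoc] using hs⟩

theorem isIso_of_not_properMono {A X : C} (m : A ⟶ X) [Mono m] (h : ¬ ProperMono m) :
    IsIso m := by
  rw [ProperMono, not_and] at h
  obtain ⟨s, hs⟩ := not_not.mp (h inferInstance)
  have : (m ≫ s) ≫ m = 𝟙 A ≫ m := by
    rw [Category.assoc, hs, Category.comp_id, Category.id_comp]
  exact ⟨s, (cancel_mono m).mp this, hs⟩

theorem properMono_of_iso {A X Y : C} {m : A ⟶ X} (e : X ≅ Y) (hm : ProperMono m) :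
    ProperMono (m ≫ e.hom) := by
  haveI : Mono m := hm.1
  refine ⟨mono_comp _ _, ?_⟩
  rintro ⟨s, hs⟩
  refine hm.2 ⟨e.hom ≫ s, ?_⟩
  have := congrArg (fun t => e.hom ≫ t ≫ e.inv) hs
  simpa [Category.assoc] using this

theorem hasProperSubobject_of_iso {X Y : C} (e : X ≅ Y) (h : HasProperSubobject X) :
    HasProperSubobject Y := by
  obtain ⟨M, m, hm⟩ := h
  exact ⟨M, m ≫ e.hom, properMono_of_iso e hm⟩

theorem finite_subobject_of_mono {A B : C} (m : A ⟶ B) [Mono m] (h : Finite (Subobject B)) :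
    Finite (Subobject A) := by
  refine Finite.of_injective (fun S : Subobject A => Subobject.mk (S.arrow ≫ m)) ?_
  intro S T hST
  have hST' : Subobject.mk (S.arrow ≫ m) = Subobject.mk (T.arrow ≫ m) := hST
  have h1 := le_of_eq hST'
  have h2 := le_of_eq hST'.symm
  refine le_antisymm (Subobject.le_of_comm (Subobject.ofMkLEMk _ _ h1) ?_)
    (Subobject.le_of_comm (Subobject.ofMkLEMk _ _ h2) ?_) <;>
    rw [← cancel_mono m, Category.assoc, Subobject.ofMkLEMk_comp]

theorem isPushout_comp_iso {W U V X Y : C} {wu : W ⟶ U} {wv : W ⟶ V} {u : U ⟶ X} {v : V ⟶ X}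
    (hpo : IsPushout wu wv u v) (e : X ≅ Y) : IsPushout wu wv (u ≫ e.hom) (v ≫ e.hom) := by
  have t : IsPushout v (𝟙 V) e.hom (v ≫ e.hom) :=
    IsPushout.of_vert_isIso ⟨by rw [Category.id_comp]⟩
  simpa using hpo.paste_vert t

theorem irreducibleObject_of_iso {X Y : C} (e : X ≅ Y) (h : IrreducibleObject X) :
    IrreducibleObject Y := by
  obtain ⟨h1, h2, h3⟩ := h
  refine ⟨finite_subobject_of_mono e.inv h1, hasProperSubobject_of_iso e h2, ?_⟩
  intro W U V wu wv u v hwu hwv hpo hprop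
  haveI : Mono u := hprop.1.1
  haveI : Mono v := hprop.2.1
  refine h3 wu wv (u ≫ e.inv) (v ≫ e.inv) hwu hwv (isPushout_comp_iso hpo e.symm) ?_
  exact ⟨properMono_of_iso e.symm hprop.1, properMono_of_iso e.symm hprop.2⟩

/-- The property of being irreducible or having no proper subobject. -/
def IrrOrSimple (Z : C) : Prop := IrreducibleObject Z ∨ ¬ HasProperSubobject Z

theorem irrOrSimple_of_iso {X Y : C} (e : X ≅ Y) (h : IrrOrSimple X) : IrrOrSimple Y := by
  rcases h with h | h
  · exact Or.inl (irreducibleObject_of_iso e h)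
  · exact Or.inr (fun hy => h (hasProperSubobject_of_iso e.symm hy))

end ObjDecomp

section Part2
open ObjDecomp

namespace ObjDecomp

variable {C : Type u} [Category.{v} C]

/-- The sub-poset of `Subobject X` on irreducible-or-simple subobjects, as a thin category
with hom types in `Type v`. -/
abbrev IrrSub (X : C) : Type max u v := { A : Subobject X // IrrOrSimple ((A : C)) }

instance (X : C) : Category.{v} (IrrSub X) where
  Hom A B := ULift.{v} (PLift (A.1 ≤ B.1))
  id A := ⟨⟨le_refl _⟩⟩
  comp f g := ⟨⟨le_trans f.down.down g.down.down⟩⟩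

instance (X : C) (A B : IrrSub X) : Subsingleton (A ⟶ B) :=
  ⟨fun f g => ULift.ext _ _ (Subsingleton.elim (α := PLift (A.1 ≤ B.1)) _ _)⟩

/-- The tautological diagram of irreducible-or-simple subobjects. -/
@[reducible] noncomputable def irrDiag (X : C) : IrrSub X ⥤ C where
  obj A := ((A.1 : C))
  map {A B} f := Subobject.ofLE _ _ f.down.down
  map_id A := Subobject.ofLE_refl _
  map_comp {A B D} f g := by
    rw [← cancel_mono D.1.arrow, Category.assoc, Subobject.ofLE_arrow, Subobject.ofLE_arrow,
      Subobject.ofLE_arrow]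

/-- The tautological cocone on the diagram of irreducible-or-simple subobjects. -/
@[reducible] noncomputable def irrCocone (X : C) : Cocone (irrDiag X) where
  pt := X
  ι := { app := fun A => A.1.arrow
         naturality := fun A B f => by
           simp only [irrDiag, Functor.const_obj_obj, Functor.const_obj_map, Category.comp_id]
           exact Subobject.ofLE_arrow _ }

theorem irrCocone_app {X : C} (A : IrrSub X) : (irrCocone X).ι.app A = A.1.arrow := rfl

/-- Image of a subobject along a monomorphism. -/
noncomputable def mapSub {Y X : C} (m : Y ⟶ X) [Mono m] (A : Subobject Y) : Subobject X :=
  Subobject.mk (A.arrow ≫ m)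

theorem mapSub_le {Y X : C} (m : Y ⟶ X) [Mono m] {A B : Subobject Y} (h : A ≤ B) :
    mapSub m A ≤ mapSub m B :=
  Subobject.mk_le_mk_of_comm (Subobject.ofLE _ _ h)
    (by rw [← Category.assoc, Subobject.ofLE_arrow])

theorem le_of_mapSub_le {Y X : C} (m : Y ⟶ X) [Mono m] {A B : Subobject Y}
    (h : mapSub m A ≤ mapSub m B) : A ≤ B := by
  refine Subobject.le_of_comm (Subobject.ofMkLEMk _ _ h) ?_
  rw [← cancel_mono m, Category.assoc, Subobject.ofMkLEMk_comp h]

theorem mapSub_injective {Y X : C} (m : Y ⟶ X) [Mono m] :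
    Function.Injective (mapSub m) := fun A B h =>
  le_antisymm (le_of_mapSub_le m (le_of_eq h)) (le_of_mapSub_le m (le_of_eq h.symm))

theorem mapSub_ne_top {Y X : C} (m : Y ⟶ X) (hm : ProperMono m) (A : Subobject Y) :
    haveI : Mono m := hm.1
    mapSub m A ≠ ⊤ := by
  haveI : Mono m := hm.1
  intro h
  haveI : IsIso (A.arrow ≫ m) := (Subobject.isIso_iff_mk_eq_top _).mpr h
  exact hm.2 ⟨inv (A.arrow ≫ m) ≫ A.arrow, by rw [Category.assoc, IsIso.inv_hom_id]⟩

theorem card_lt_of_properMono {Y X : C} (m : Y ⟶ X) (hm : ProperMono m)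
    (h : Finite (Subobject X)) :
    Nat.card (Subobject Y) < Nat.card (Subobject X) := by
  haveI : Mono m := hm.1
  haveI : Finite (Subobject Y) := finite_subobject_of_mono m h
  haveI := Fintype.ofFinite (Subobject X)
  haveI := Fintype.ofFinite (Subobject Y)
  rw [Nat.card_eq_fintype_card, Nat.card_eq_fintype_card]
  refine Fintype.card_lt_of_injective_of_notMem _ (mapSub_injective m) (b := ⊤) ?_
  rintro ⟨A, hA⟩
  exact mapSub_ne_top m hm A hA

theorem mapSub_mapSub {Z Y X : C} (m₁ : Z ⟶ Y) (m₂ : Y ⟶ X) [Mono m₁] [Mono m₂]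
    (A : Subobject Z) : mapSub m₂ (mapSub m₁ A) = Subobject.mk (A.arrow ≫ m₁ ≫ m₂) := by
  refine Subobject.mk_eq_mk_of_comm _ _ (Subobject.underlyingIso (A.arrow ≫ m₁)) ?_
  show _ = (Subobject.mk (A.arrow ≫ m₁)).arrow ≫ m₂
  rw [← Subobject.underlyingIso_hom_comp_eq_mk (A.arrow ≫ m₁)]
  simp only [Category.assoc]
  rfl

/-- Data of a restriction of the irreducible subobjects of `Y` to those of `X`,
along a monomorphism `m : Y ⟶ X`. -/
structure RestrictData {Y X : C} (m : Y ⟶ X) [Mono m] where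
  G : IrrSub Y → IrrSub X
  le : ∀ {A B : IrrSub Y}, A.1 ≤ B.1 → (G A).1 ≤ (G B).1
  ρ : ∀ A : IrrSub Y, (((G A).1 : C)) ≅ ((A.1 : C))
  fac : ∀ A : IrrSub Y, (ρ A).hom ≫ A.1.arrow ≫ m = (G A).1.arrow

/-- The functor between thin categories induced by a `RestrictData`. -/
@[reducible] def RestrictData.functor {Y X : C} {m : Y ⟶ X} [Mono m] (R : RestrictData m) :
    IrrSub Y ⥤ IrrSub X where
  obj := R.G
  map f := ⟨⟨R.le f.down.down⟩⟩
  map_id _ := Subsingleton.elim _ _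
  map_comp _ _ := Subsingleton.elim _ _

/-- The canonical restriction data along a monomorphism. -/
noncomputable def mapRestrict {Y X : C} (m : Y ⟶ X) [Mono m] : RestrictData m where
  G A := ⟨mapSub m A.1, irrOrSimple_of_iso (Subobject.underlyingIso (A.1.arrow ≫ m)).symm A.2⟩
  le h := mapSub_le m h
  ρ A := Subobject.underlyingIso (A.1.arrow ≫ m)
  fac A := Subobject.underlyingIso_hom_comp_eq_mk (A.1.arrow ≫ m)

/-- Composition of restriction data. -/
@[reducible] noncomputable def RestrictData.comp {Z Y X : C} {m₁ : Z ⟶ Y} {m₂ : Y ⟶ X} [Mono m₁] [Mono m₂]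
    (R₁ : RestrictData m₁) (R₂ : RestrictData m₂) : RestrictData (m₁ ≫ m₂) where
  G := R₂.G ∘ R₁.G
  le h := R₂.le (R₁.le h)
  ρ A := R₂.ρ (R₁.G A) ≪≫ R₁.ρ A
  fac A := by
    have h₁ := R₁.fac A
    have h₂ := R₂.fac (R₁.G A)
    show (R₂.ρ (R₁.G A) ≪≫ R₁.ρ A).hom ≫ A.1.arrow ≫ m₁ ≫ m₂ = (R₂.G (R₁.G A)).1.arrow
    rw [Iso.trans_hom, Category.assoc,
      show (R₁.ρ A).hom ≫ A.1.arrow ≫ m₁ ≫ m₂ = ((R₁.ρ A).hom ≫ A.1.arrow ≫ m₁) ≫ m₂ by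
        simp only [Category.assoc], h₁]
    exact h₂

theorem RestrictData.ofLE_fac {Y X : C} {m : Y ⟶ X} [Mono m] (R : RestrictData m)
    {A B : IrrSub Y} (h : A.1 ≤ B.1) :
    Subobject.ofLE _ _ (R.le h) ≫ (R.ρ B).hom ≫ B.1.arrow = (R.ρ A).hom ≫ A.1.arrow := by
  rw [← cancel_mono m]
  simp only [Category.assoc]
  rw [R.fac B, R.fac A, Subobject.ofLE_arrow]

end ObjDecomp
end Part2
section Part3
namespace ObjDecomp

variable {C : Type u} [Category.{v} C]

/-- A cocone over a diagram with a terminal object whose component at the terminal object is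
an isomorphism is a universal colimit. -/
theorem universal_of_terminal {J : Type*} [Category J] {F : J ⥤ C} (c : Cocone F)
    (t : J) (ht : IsTerminal t) (hiso : IsIso (c.ι.app t)) : IsUniversalColimit c := by
  intro F' c' α f hcomm hα hpb
  -- the component of `c'` at `t` is an isomorphism
  have hsq := hpb t
  have hisot : IsIso (c'.ι.app t) := by
    have hl : (𝟙 c'.pt) ≫ f = (f ≫ inv (c.ι.app t)) ≫ c.ι.app t := by simp
    refine ⟨hsq.lift (𝟙 c'.pt) (f ≫ inv (c.ι.app t)) hl, ?_, hsq.lift_fst _ _ _⟩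
    refine hsq.hom_ext ?_ ?_
    · rw [Category.assoc, hsq.lift_fst]; simp
    · rw [Category.assoc, hsq.lift_snd, Category.id_comp, ← Category.assoc, hsq.w,
        Category.assoc, IsIso.hom_inv_id, Category.comp_id]
  refine ⟨(colimitOfDiagramTerminal ht F').ofIsoColimit (Cocones.ext (asIso (c'.ι.app t)) ?_)⟩
  intro j
  simpa using c'.w (ht.from j)

variable [HasPullbacks C]

/-- Pulling back a van Kampen pushout along a morphism into its vertex yields a pushout. -/
theorem pulled_back_pushout {W U V X : C} {wu : W ⟶ U} {wv : W ⟶ V} {u : U ⟶ X} {v : V ⟶ X}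
    (hpo : IsPushout wu wv u v) (hVK : hpo.IsVanKampen)
    {P U' V' W' : C} {f : P ⟶ X}
    {u' : U' ⟶ P} {fU : U' ⟶ U} (hU' : IsPullback u' fU f u)
    {v' : V' ⟶ P} {fV : V' ⟶ V} (hV' : IsPullback v' fV f v)
    {w' : W' ⟶ P} {fW : W' ⟶ W} (hW' : IsPullback w' fW f (wu ≫ u))
    {wu' : W' ⟶ U'} {wv' : W' ⟶ V'}
    (h1 : wu' ≫ u' = w') (h2 : wu' ≫ fU = fW ≫ wu)
    (h3 : wv' ≫ v' = w') (h4 : wv' ≫ fV = fW ≫ wv) :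
    IsPushout wu' wv' u' v' := by
  have hWv' : IsPullback w' fW f (wv ≫ v) := hpo.w ▸ hW'
  have backU : IsPullback wu' fW fU wu := by
    refine IsPullback.of_right ?_ h2 hU'
    rw [h1]; exact hW'
  have backV : IsPullback wv' fW fV wv := by
    refine IsPullback.of_right ?_ h4 hV'
    rw [h3]; exact hWv'
  exact (hVK wu' wv' u' v' fW fU fV f backU backV hU'.toCommSq hV'.toCommSq
    ⟨h1.trans h3.symm⟩).mpr ⟨hU', hV'⟩

/-- Key covering lemma: any irreducible-or-simple subobject of the vertex of a van Kampen
pushout of monomorphisms factors through one of the two legs. -/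
theorem cover_of_irrOrSimple {W U V X : C} {wu : W ⟶ U} {wv : W ⟶ V} {u : U ⟶ X} {v : V ⟶ X}
    [Mono wu] [Mono wv] [Mono u] [Mono v]
    (hpo : IsPushout wu wv u v) (hVK : hpo.IsVanKampen)
    (A : Subobject X) (hA : IrrOrSimple ((A : C))) :
    A ≤ Subobject.mk u ∨ A ≤ Subobject.mk v := by
  haveI : Mono (wu ≫ u) := mono_comp _ _
  set a := A.arrow with ha
  let hU' : IsPullback (pullback.fst a u) (pullback.snd a u) a u := IsPullback.of_hasPullback a u
  let hV' : IsPullback (pullback.fst a v) (pullback.snd a v) a v := IsPullback.of_hasPullback a v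
  let hW' : IsPullback (pullback.fst a (wu ≫ u)) (pullback.snd a (wu ≫ u)) a (wu ≫ u) :=
    IsPullback.of_hasPullback a (wu ≫ u)
  let wuA : pullback a (wu ≫ u) ⟶ pullback a u :=
    pullback.lift (pullback.fst a (wu ≫ u)) (pullback.snd a (wu ≫ u) ≫ wu)
      (by rw [pullback.condition]; simp [Category.assoc])
  let wvA : pullback a (wu ≫ u) ⟶ pullback a v :=
    pullback.lift (pullback.fst a (wu ≫ u)) (pullback.snd a (wu ≫ u) ≫ wv)
      (by
        rw [pullback.condition]
        simp only [Category.assoc]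
        exact congrArg (fun t => pullback.snd a (wu ≫ u) ≫ t) hpo.w)
  have hpoA : IsPushout wuA wvA (pullback.fst a u) (pullback.fst a v) :=
    pulled_back_pushout hpo hVK hU' hV' hW'
      (pullback.lift_fst _ _ _) (pullback.lift_snd _ _ _)
      (pullback.lift_fst _ _ _) (pullback.lift_snd _ _ _)
  haveI : Mono (pullback.fst a u) := inferInstance
  haveI : Mono (pullback.fst a v) := inferInstance
  haveI hmwuA : Mono wuA := by
    have : Mono (wuA ≫ pullback.fst a u) := by
      rw [pullback.lift_fst]; infer_instance
    exact mono_of_mono wuA (pullback.fst a u)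
  haveI hmwvA : Mono wvA := by
    have : Mono (wvA ≫ pullback.fst a v) := by
      rw [pullback.lift_fst]; infer_instance
    exact mono_of_mono wvA (pullback.fst a v)
  -- at least one of the two projections is not a proper mono
  have hnp : ¬ ProperMono (pullback.fst a u) ∨ ¬ ProperMono (pullback.fst a v) := by
    rcases hA with hA | hA
    · have := hA.2.2 wuA wvA (pullback.fst a u) (pullback.fst a v) hmwuA hmwvA hpoA
      tauto
    · by_cases h : ProperMono (pullback.fst a u)
      · exact absurd ⟨_, _, h⟩ hA
      · exact Or.inl h
  rcases hnp with h | h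
  · haveI := isIso_of_not_properMono _ h
    refine Or.inl (Subobject.le_mk_of_comm (inv (pullback.fst a u) ≫ pullback.snd a u) ?_)
    rw [Category.assoc, ← pullback.condition, ← Category.assoc, IsIso.inv_hom_id,
      Category.id_comp]
  · haveI := isIso_of_not_properMono _ h
    refine Or.inr (Subobject.le_mk_of_comm (inv (pullback.fst a v) ≫ pullback.snd a v) ?_)
    rw [Category.assoc, ← pullback.condition, ← Category.assoc, IsIso.inv_hom_id,
      Category.id_comp]

end ObjDecomp
end Part3
section Part4
namespace ObjDecomp

variable {C : Type u} [Category.{v} C]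

private theorem rest_w {Y X : C} {m : Y ⟶ X} [Mono m] (R : RestrictData m)
    {F' : IrrSub X ⥤ C} (c' : Cocone F') (α : F' ⟶ irrDiag X) {f : c'.pt ⟶ X}
    (hpb : ∀ j : IrrSub X, IsPullback (c'.ι.app j) (α.app j) f ((irrCocone X).ι.app j))
    (A : IrrSub Y) :
    c'.ι.app (R.G A) ≫ f = (α.app (R.G A) ≫ (R.ρ A).hom ≫ A.1.arrow) ≫ m := by
  have h := (hpb (R.G A)).w
  rw [irrCocone_app, ← R.fac A] at h
  simpa [Category.assoc] using h

private theorem rest_nat_aux {Y X : C} {m : Y ⟶ X} [Mono m] (R : RestrictData m)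
    {F' : IrrSub X ⥤ C} (α : F' ⟶ irrDiag X) {A B : IrrSub Y} (g : A ⟶ B) :
    (R.functor ⋙ F').map g ≫ α.app (R.G B) =
      α.app (R.G A) ≫ Subobject.ofLE _ _ (R.le g.down.down) :=
  α.naturality (R.functor.map g)

/-- The restriction of the pulled-back cocone `c'` to the subobjects of `Y`. -/
@[reducible] noncomputable def restCocone {Y X : C} {m : Y ⟶ X} [Mono m] (R : RestrictData m)
    {F' : IrrSub X ⥤ C} (c' : Cocone F') (α : F' ⟶ irrDiag X) {f : c'.pt ⟶ X}
    (hpb : ∀ j : IrrSub X, IsPullback (c'.ι.app j) (α.app j) f ((irrCocone X).ι.app j))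
    {Y' : C} {yP : Y' ⟶ c'.pt} {yY : Y' ⟶ Y} (hY' : IsPullback yP yY f m) :
    Cocone (R.functor ⋙ F') where
  pt := Y'
  ι :=
    { app := fun A => hY'.lift (c'.ι.app (R.G A))
        (α.app (R.G A) ≫ (R.ρ A).hom ≫ A.1.arrow) (rest_w R c' α hpb A)
      naturality := fun A B g => by
        refine hY'.hom_ext ?_ ?_
        · simp only [Category.assoc, IsPullback.lift_fst, Functor.const_obj_obj, Functor.const_obj_map,
            Category.comp_id, Category.id_comp]
          exact c'.w (R.functor.map g)
        · simp only [Category.assoc, IsPullback.lift_snd, Functor.const_obj_obj, Functor.const_obj_map,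
            Category.comp_id, Category.id_comp]
          conv_rhs => rw [← R.ofLE_fac g.down.down, ← Category.assoc,
            ← rest_nat_aux R α g, Category.assoc] }

@[simp] theorem restCocone_fst {Y X : C} {m : Y ⟶ X} [Mono m] (R : RestrictData m)
    {F' : IrrSub X ⥤ C} (c' : Cocone F') (α : F' ⟶ irrDiag X) {f : c'.pt ⟶ X}
    (hpb : ∀ j : IrrSub X, IsPullback (c'.ι.app j) (α.app j) f ((irrCocone X).ι.app j))
    {Y' : C} {yP : Y' ⟶ c'.pt} {yY : Y' ⟶ Y} (hY' : IsPullback yP yY f m) (A : IrrSub Y) :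
    (restCocone R c' α hpb hY').ι.app A ≫ yP = c'.ι.app (R.G A) :=
  hY'.lift_fst _ _ _

@[simp] theorem restCocone_snd {Y X : C} {m : Y ⟶ X} [Mono m] (R : RestrictData m)
    {F' : IrrSub X ⥤ C} (c' : Cocone F') (α : F' ⟶ irrDiag X) {f : c'.pt ⟶ X}
    (hpb : ∀ j : IrrSub X, IsPullback (c'.ι.app j) (α.app j) f ((irrCocone X).ι.app j))
    {Y' : C} {yP : Y' ⟶ c'.pt} {yY : Y' ⟶ Y} (hY' : IsPullback yP yY f m) (A : IrrSub Y) :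
    (restCocone R c' α hpb hY').ι.app A ≫ yY =
      α.app (R.G A) ≫ (R.ρ A).hom ≫ A.1.arrow :=
  hY'.lift_snd _ _ _

/-- The natural transformation exhibiting the restricted diagram as a pullback of the
canonical diagram of `Y`. -/
noncomputable def restNat {Y X : C} {m : Y ⟶ X} [Mono m] (R : RestrictData m)
    {F' : IrrSub X ⥤ C} (α : F' ⟶ irrDiag X) : (R.functor ⋙ F') ⟶ irrDiag Y where
  app A := α.app (R.G A) ≫ (R.ρ A).hom
  naturality A B g := by
    rw [← cancel_mono (B.1.arrow)]
    simp only [Category.assoc]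
    rw [show (irrDiag Y).map g ≫ B.1.arrow = A.1.arrow from Subobject.ofLE_arrow g.down.down]
    conv_rhs => rw [← R.ofLE_fac g.down.down, ← Category.assoc,
      ← rest_nat_aux R α g, Category.assoc]

theorem restNat_pullback {Y X : C} {m : Y ⟶ X} [Mono m] (R : RestrictData m)
    {F' : IrrSub X ⥤ C} (α : F' ⟶ irrDiag X) (hα : NatTrans.Equifibered α) :
    NatTrans.Equifibered (restNat R α) := by
  intro A B g
  have s := hα (R.functor.map g)
  have w : (irrDiag X).map (R.functor.map g) ≫ (R.ρ B).hom =
      (R.ρ A).hom ≫ (irrDiag Y).map g := by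
    rw [← cancel_mono (B.1.arrow)]
    simp only [Category.assoc]
    rw [show (irrDiag Y).map g ≫ B.1.arrow = A.1.arrow from Subobject.ofLE_arrow g.down.down]
    exact R.ofLE_fac g.down.down
  have t : IsPullback ((irrDiag X).map (R.functor.map g)) (R.ρ A).hom (R.ρ B).hom
      ((irrDiag Y).map g) := IsPullback.of_vert_isIso ⟨w⟩
  exact s.paste_vert t

theorem restCocone_pullback {Y X : C} {m : Y ⟶ X} [Mono m] (R : RestrictData m)
    {F' : IrrSub X ⥤ C} (c' : Cocone F') (α : F' ⟶ irrDiag X) {f : c'.pt ⟶ X}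
    (hpb : ∀ j : IrrSub X, IsPullback (c'.ι.app j) (α.app j) f ((irrCocone X).ι.app j))
    {Y' : C} {yP : Y' ⟶ c'.pt} {yY : Y' ⟶ Y} (hY' : IsPullback yP yY f m) (A : IrrSub Y) :
    IsPullback ((restCocone R c' α hpb hY').ι.app A) ((restNat R α).app A) yY
      ((irrCocone Y).ι.app A) := by
  have t2 : IsPullback ((R.G A).1.arrow) (R.ρ A).hom (𝟙 X) (A.1.arrow ≫ m) :=
    IsPullback.of_vert_isIso ⟨by rw [Category.comp_id, ← R.fac A]⟩
  have big := (hpb (R.G A)).paste_vert t2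
  rw [Category.comp_id] at big
  rw [← restCocone_fst R c' α hpb hY' A] at big
  refine IsPullback.of_right big ?_ hY'
  rw [restCocone_snd]
  show α.app (R.G A) ≫ (R.ρ A).hom ≫ A.1.arrow = (α.app (R.G A) ≫ (R.ρ A).hom) ≫ A.1.arrow
  simp only [Category.assoc]

theorem restCocone_isColimit {Y X : C} {m : Y ⟶ X} [Mono m] (R : RestrictData m)
    {F' : IrrSub X ⥤ C} (c' : Cocone F') (α : F' ⟶ irrDiag X) {f : c'.pt ⟶ X}
    (hpb : ∀ j : IrrSub X, IsPullback (c'.ι.app j) (α.app j) f ((irrCocone X).ι.app j))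
    {Y' : C} {yP : Y' ⟶ c'.pt} {yY : Y' ⟶ Y} (hY' : IsPullback yP yY f m)
    (hα : NatTrans.Equifibered α)
    (hY : IsUniversalColimit (irrCocone Y)) :
    Nonempty (IsColimit (restCocone R c' α hpb hY')) := by
  refine hY (restCocone R c' α hpb hY') (restNat R α) yY ?_
    (restNat_pullback R α hα) (restCocone_pullback R c' α hpb hY')
  ext A
  show (restNat R α).app A ≫ (irrCocone Y).ι.app A =
    (restCocone R c' α hpb hY').ι.app A ≫ yY
  rw [restCocone_snd, irrCocone_app]
  show (α.app (R.G A) ≫ (R.ρ A).hom) ≫ A.1.arrow = _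
  simp only [Category.assoc]

end ObjDecomp
end Part4
section Part5
namespace ObjDecomp

variable {C : Type u} [Category.{v} C]

theorem app_congr_aux {J : Type*} [Category J] {F' : J ⥤ C} (c' : Cocone F')
    {j j' : J} (h : j = j') :
    eqToHom (congrArg F'.obj h) ≫ c'.ι.app j' = c'.ι.app j := by
  subst h; simp

theorem comp_congr_aux {X : C} {F' : IrrSub X ⥤ C} (α : F' ⟶ irrDiag X)
    {j j' : IrrSub X} (h : j = j') {Bc : C} (b : Bc ⟶ X) [Mono b]
    (r : ((j.1 : C)) ≅ Bc) (r' : ((j'.1 : C)) ≅ Bc)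
    (hr : r.hom ≫ b = j.1.arrow) (hr' : r'.hom ≫ b = j'.1.arrow)
    {T : C} (t : Bc ⟶ T) :
    α.app j ≫ r.hom ≫ t = eqToHom (congrArg F'.obj h) ≫ α.app j' ≫ r'.hom ≫ t := by
  subst h
  have : r = r' := Iso.ext (by rw [← cancel_mono b, hr, hr'])
  subst this
  simp

/-- Compatibility of the restricted cocones with composition of restriction data. -/
theorem restCocone_comp {Y₁ Y₂ X : C} {m₁ : Y₁ ⟶ Y₂} {m₂ : Y₂ ⟶ X} [Mono m₁] [Mono m₂]
    (R₁ : RestrictData m₁) (R₂ : RestrictData m₂)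
    {F' : IrrSub X ⥤ C} (c' : Cocone F') (α : F' ⟶ irrDiag X) {f : c'.pt ⟶ X}
    (hpb : ∀ j : IrrSub X, IsPullback (c'.ι.app j) (α.app j) f ((irrCocone X).ι.app j))
    {Y₂' : C} {yP₂ : Y₂' ⟶ c'.pt} {yY₂ : Y₂' ⟶ Y₂} (hY₂ : IsPullback yP₂ yY₂ f m₂)
    {Y₁' : C} {yP₁ : Y₁' ⟶ c'.pt} {yY₁ : Y₁' ⟶ Y₁} (hY₁ : IsPullback yP₁ yY₁ f (m₁ ≫ m₂))
    {t : Y₁' ⟶ Y₂'} (ht1 : t ≫ yP₂ = yP₁) (ht2 : t ≫ yY₂ = yY₁ ≫ m₁)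
    (B : IrrSub Y₁) :
    (restCocone (R₁.comp R₂) c' α hpb hY₁).ι.app B ≫ t =
      (restCocone R₂ c' α hpb hY₂).ι.app (R₁.G B) := by
  refine hY₂.hom_ext ?_ ?_
  · rw [Category.assoc, ht1, restCocone_fst, restCocone_fst]
    rfl
  · rw [Category.assoc, ht2, ← Category.assoc, restCocone_snd, restCocone_snd]
    simp only [Category.assoc]
    show α.app ((R₁.comp R₂).G B) ≫
        ((R₂.ρ (R₁.G B)).hom ≫ (R₁.ρ B).hom) ≫ B.1.arrow ≫ m₁ = _
    rw [Category.assoc, R₁.fac B]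
    rfl

/-- Two restricted cocones along equal monomorphisms with pointwise equal restriction data
have equal components up to `eqToHom`. -/
theorem restCocone_congr {Y X : C} {m m' : Y ⟶ X} [Mono m] [Mono m'] (hmm' : m = m')
    (R : RestrictData m) (R' : RestrictData m')
    {F' : IrrSub X ⥤ C} (c' : Cocone F') (α : F' ⟶ irrDiag X) {f : c'.pt ⟶ X}
    (hpb : ∀ j : IrrSub X, IsPullback (c'.ι.app j) (α.app j) f ((irrCocone X).ι.app j))
    {Y' : C} {yP : Y' ⟶ c'.pt} {yY : Y' ⟶ Y}
    (hY' : IsPullback yP yY f m) (hY'' : IsPullback yP yY f m')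
    (B : IrrSub Y) (hG : R.G B = R'.G B) :
    (restCocone R c' α hpb hY').ι.app B =
      eqToHom (congrArg F'.obj hG) ≫ (restCocone R' c' α hpb hY'').ι.app B := by
  subst hmm'
  refine hY'.hom_ext ?_ ?_
  · rw [restCocone_fst, Category.assoc, restCocone_fst]
    exact (app_congr_aux c' hG).symm
  · rw [restCocone_snd, Category.assoc, restCocone_snd]
    exact comp_congr_aux α hG (B.1.arrow ≫ m) (R.ρ B) (R'.ρ B) (R.fac B) (R'.fac B) B.1.arrow

variable [Adhesive C] [HasPullbacks C]

/-- Main induction: the canonical cocone on the diagram of irreducible-or-simple subobjects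
of a subobject-finite object in an adhesive category is a universal colimit. -/
theorem irr_universal : ∀ (n : ℕ) (X : C), Finite (Subobject X) →
    Nat.card (Subobject X) ≤ n → IsUniversalColimit (irrCocone X) := by
  intro n
  induction n with
  | zero =>
    intro X hfin hcard
    haveI := hfin
    haveI : Nonempty (Subobject X) := ⟨⊤⟩
    have : 0 < Nat.card (Subobject X) := Nat.card_pos
    omega
  | succ n ih =>
    intro X hfin hcard
    haveI := hfin
    by_cases hT : IrrOrSimple (((⊤ : Subobject X) : C))
    · refine universal_of_terminal (irrCocone X) ⟨⊤, hT⟩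
        (IsTerminal.ofUniqueHom (fun A => ⟨⟨le_top⟩⟩) (fun A m => Subsingleton.elim _ _)) ?_
      show IsIso ((⊤ : Subobject X).arrow)
      infer_instance
    · -- X is neither irreducible nor simple: split it as a van Kampen pushout
      rw [IrrOrSimple, not_or, not_not] at hT
      have hpsX : HasProperSubobject X :=
        hasProperSubobject_of_iso (asIso (⊤ : Subobject X).arrow) hT.2
      have hIrrX : ¬ IrreducibleObject X := fun h =>
        hT.1 (irreducibleObject_of_iso (asIso (⊤ : Subobject X).arrow).symm h)
      have h3 : ¬ ∀ (W U V : C) (wu : W ⟶ U) (wv : W ⟶ V) (u : U ⟶ X) (v : V ⟶ X),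
          Mono wu → Mono wv → IsPushout wu wv u v → ¬(ProperMono u ∧ ProperMono v) := by
        intro h
        exact hIrrX ⟨hfin, hpsX, fun {W U V} wu wv u v h1 h2 hp => h W U V wu wv u v h1 h2 hp⟩
      push_neg at h3
      obtain ⟨W, U, V, wu, wv, u, v, hwu, hwv, hpo, hu, hv⟩ := h3
      haveI : Mono wu := hwu
      haveI : Mono wv := hwv
      haveI : Mono u := hu.1
      haveI : Mono v := hv.1
      haveI : Mono (wu ≫ u) := mono_comp _ _
      have hVK : hpo.IsVanKampen := Adhesive.van_kampen hpo
      -- inductive hypotheses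
      have hfinU : Finite (Subobject U) := finite_subobject_of_mono u hfin
      have hfinV : Finite (Subobject V) := finite_subobject_of_mono v hfin
      have hfinW : Finite (Subobject W) := finite_subobject_of_mono (wu ≫ u) hfin
      have hUuniv := ih U hfinU (by have := card_lt_of_properMono u hu hfin; omega)
      have hVuniv := ih V hfinV (by have := card_lt_of_properMono v hv hfin; omega)
      have hWuniv := ih W hfinW (by
        have := card_lt_of_properMono (wu ≫ u) (properMono_comp wu hu) hfin; omega)
      -- prove universality of the canonical cocone of X
      intro F' c' α f hcomm hα hpb
      -- pull back the pushout square along f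
      let u' : pullback f u ⟶ c'.pt := pullback.fst f u
      let fU : pullback f u ⟶ U := pullback.snd f u
      have hU' : IsPullback u' fU f u := IsPullback.of_hasPullback f u
      let v' : pullback f v ⟶ c'.pt := pullback.fst f v
      let fV : pullback f v ⟶ V := pullback.snd f v
      have hV' : IsPullback v' fV f v := IsPullback.of_hasPullback f v
      let w' : pullback f (wu ≫ u) ⟶ c'.pt := pullback.fst f (wu ≫ u)
      let fW : pullback f (wu ≫ u) ⟶ W := pullback.snd f (wu ≫ u)
      have hW' : IsPullback w' fW f (wu ≫ u) := IsPullback.of_hasPullback f (wu ≫ u)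
      have hW'v : IsPullback w' fW f (wv ≫ v) := hpo.w ▸ hW'
      let wu' : pullback f (wu ≫ u) ⟶ pullback f u :=
        hU'.lift w' (fW ≫ wu) (by rw [hW'.w]; simp only [Category.assoc])
      have hwu'_fst : wu' ≫ u' = w' := hU'.lift_fst _ _ _
      have hwu'_snd : wu' ≫ fU = fW ≫ wu := hU'.lift_snd _ _ _
      let wv' : pullback f (wu ≫ u) ⟶ pullback f v :=
        hV'.lift w' (fW ≫ wv) (by rw [hW'v.w]; simp only [Category.assoc])
      have hwv'_fst : wv' ≫ v' = w' := hV'.lift_fst _ _ _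
      have hwv'_snd : wv' ≫ fV = fW ≫ wv := hV'.lift_snd _ _ _
      have hpo' : IsPushout wu' wv' u' v' :=
        pulled_back_pushout hpo hVK hU' hV' hW' hwu'_fst hwu'_snd hwv'_fst hwv'_snd
      -- restriction data
      let RU := mapRestrict u
      let RV := mapRestrict v
      let RWu := (mapRestrict wu).comp (mapRestrict u)
      let RWv := (mapRestrict wv).comp (mapRestrict v)
      obtain ⟨hUcolim⟩ := restCocone_isColimit RU c' α hpb hU' hα hUuniv
      obtain ⟨hVcolim⟩ := restCocone_isColimit RV c' α hpb hV' hα hVuniv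
      obtain ⟨hWcolim⟩ := restCocone_isColimit RWu c' α hpb hW' hα hWuniv
      -- the two restrictions to W agree
      have hGW : ∀ B : IrrSub W, RWu.G B = RWv.G B := by
        intro B
        apply Subtype.ext
        show mapSub u (mapSub wu B.1) = mapSub v (mapSub wv B.1)
        rw [mapSub_mapSub, mapSub_mapSub]
        exact Subobject.mk_eq_mk_of_comm _ _ (Iso.refl _) (by rw [Iso.refl_hom, Category.id_comp, hpo.w])
      have hcong : ∀ B : IrrSub W, (restCocone RWu c' α hpb hW').ι.app B =
          eqToHom (congrArg F'.obj (hGW B)) ≫ (restCocone RWv c' α hpb hW'v).ι.app B :=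
        fun B => restCocone_congr hpo.w RWu RWv c' α hpb hW' hW'v B (hGW B)
      have hcompU : ∀ B : IrrSub W,
          (restCocone RWu c' α hpb hW').ι.app B ≫ wu' =
            (restCocone RU c' α hpb hU').ι.app ((mapRestrict wu).G B) :=
        fun B => restCocone_comp (mapRestrict wu) RU c' α hpb hU' hW' hwu'_fst hwu'_snd B
      have hcompV : ∀ B : IrrSub W,
          (restCocone RWv c' α hpb hW'v).ι.app B ≫ wv' =
            (restCocone RV c' α hpb hV').ι.app ((mapRestrict wv).G B) :=
        fun B => restCocone_comp (mapRestrict wv) RV c' α hpb hV' hW'v hwv'_fst hwv'_snd B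
      -- factorisation of irreducible subobjects of X through U or V
      have hmkB : ∀ (j : IrrSub X), j.1 ≤ Subobject.mk u → ∃ B : IrrSub U, RU.G B = j := by
        intro j h
        have hg : (Subobject.ofLE _ _ h ≫ (Subobject.underlyingIso u).hom) ≫ u = j.1.arrow := by
          rw [Category.assoc, Subobject.underlyingIso_hom_comp_eq_mk, Subobject.ofLE_arrow]
        set g : ((j.1 : C)) ⟶ U := Subobject.ofLE _ _ h ≫ (Subobject.underlyingIso u).hom
          with hgdef
        haveI : Mono g := by
          have : Mono (g ≫ u) := by rw [hg]; infer_instance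
          exact mono_of_mono g u
        refine ⟨⟨Subobject.mk g, irrOrSimple_of_iso (Subobject.underlyingIso g).symm j.2⟩, ?_⟩
        apply Subtype.ext
        show mapSub u (Subobject.mk g) = j.1
        have hmk : Subobject.mk ((Subobject.mk g).arrow ≫ u) = Subobject.mk (j.1.arrow) := by
          refine Subobject.mk_eq_mk_of_comm _ _ (Subobject.underlyingIso g) ?_
          rw [← hg, ← Category.assoc, Subobject.underlyingIso_hom_comp_eq_mk]
        rw [mapSub, hmk, Subobject.mk_arrow]
      have hmkBv : ∀ (j : IrrSub X), j.1 ≤ Subobject.mk v → ∃ B : IrrSub V, RV.G B = j := by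
        intro j h
        have hg : (Subobject.ofLE _ _ h ≫ (Subobject.underlyingIso v).hom) ≫ v = j.1.arrow := by
          rw [Category.assoc, Subobject.underlyingIso_hom_comp_eq_mk, Subobject.ofLE_arrow]
        set g : ((j.1 : C)) ⟶ V := Subobject.ofLE _ _ h ≫ (Subobject.underlyingIso v).hom
          with hgdef
        haveI : Mono g := by
          have : Mono (g ≫ v) := by rw [hg]; infer_instance
          exact mono_of_mono g v
        refine ⟨⟨Subobject.mk g, irrOrSimple_of_iso (Subobject.underlyingIso g).symm j.2⟩, ?_⟩
        apply Subtype.ext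
        show mapSub v (Subobject.mk g) = j.1
        have hmk : Subobject.mk ((Subobject.mk g).arrow ≫ v) = Subobject.mk (j.1.arrow) := by
          refine Subobject.mk_eq_mk_of_comm _ _ (Subobject.underlyingIso g) ?_
          rw [← hg, ← Category.assoc, Subobject.underlyingIso_hom_comp_eq_mk]
        rw [mapSub, hmk, Subobject.mk_arrow]
      -- gluing
      have hglue : ∀ s : Cocone F',
          wu' ≫ hUcolim.desc (s.whisker RU.functor) =
            wv' ≫ hVcolim.desc (s.whisker RV.functor) := by
        intro s
        refine hWcolim.hom_ext fun B => ?_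
        rw [← Category.assoc, hcompU B, hUcolim.fac, hcong B, Category.assoc,
          ← Category.assoc ((restCocone RWv c' α hpb hW'v).ι.app B), hcompV B, hVcolim.fac]
        exact (app_congr_aux s (hGW B)).symm
      refine ⟨{ desc := fun s => hpo'.desc (hUcolim.desc (s.whisker RU.functor))
                  (hVcolim.desc (s.whisker RV.functor)) (hglue s),
                fac := ?_, uniq := ?_ }⟩
      · intro s j
        rcases cover_of_irrOrSimple hpo hVK j.1 j.2 with h | h
        · obtain ⟨B, hB⟩ := hmkB j h
          subst hB
          rw [← restCocone_fst RU c' α hpb hU' B, Category.assoc, hpo'.inl_desc, hUcolim.fac]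
          rfl
        · obtain ⟨B, hB⟩ := hmkBv j h
          subst hB
          rw [← restCocone_fst RV c' α hpb hV' B, Category.assoc, hpo'.inr_desc, hVcolim.fac]
          rfl
      · intro s mm hm
        refine hpo'.hom_ext ?_ ?_
        · rw [hpo'.inl_desc]
          refine hUcolim.hom_ext fun B => ?_
          rw [hUcolim.fac, ← Category.assoc, restCocone_fst, hm]
          rfl
        · rw [hpo'.inr_desc]
          refine hVcolim.hom_ext fun B => ?_
          rw [hVcolim.fac, ← Category.assoc, restCocone_fst, hm]
          rfl

end ObjDecomp
end Part5

/-- Object decomposition: in an adhesive category, every subobject-finite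
object with a proper subobject is the pullback-stable colimit of a diagram whose objects
are monomorphically embedded and are irreducible or have no proper subobject. -/
theorem object_decomposition [Adhesive C] [HasPullbacks C]
    (X : C) (hfin : Finite (Subobject X)) (hps : HasProperSubobject X) :
    Nonempty (IrreducibleDecomposition X) := by
  have huniv := ObjDecomp.irr_universal (Nat.card (Subobject X)) X hfin le_rfl
  exact ⟨{ J := ObjDecomp.IrrSub X
           diag := ObjDecomp.irrDiag X
           ξ := (ObjDecomp.irrCocone X).ι
           isColimit := huniv.isColimit
           isUniversal := huniv
           mono := fun j => by show Mono (j.1.arrow); infer_instance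
           irred := fun j => j.2 }⟩
end
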